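/- arXiv:1304.7466 — 2 statements merged into one kernel-verified Lean document; each statement's English description precedes it below -/
import Mathlib

section
/- Let (φ, F) : (𝒱, 𝔟) → (𝒰, 𝔞) be a subcartesian graded functor between map-graded categories. Then F*(1_𝔞) ≅ 1_𝔟, and the maps (F*)^n((ψ_{(u,A)})_{(u,A)}) = (F^{-1} ∘ ψ_{(φ(v), F(B))} ∘ F^{⊗n})_{(v,B)} define a morphism of complexes F* : C_𝒰(𝔞) → C_𝒱(𝔟). Moreover this assignment is functorial: taking Hochschild complexes defines a contravariant functor C from the category Map_sc of map-graded categories and subcartesian graded functors to the category of complexes of k-modules, given on objects by (𝒰, 𝔞) ↦ C_𝒰(𝔞) and on morphisms by (φ,F) ↦ F*. -/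
open CategoryTheory

universe u

namespace MapGr

variable (k : Type u) [CommRing k]

/-- A (`k`-linear) map-graded category `(𝒰, 𝔞)`: a set `𝔞_U` of objects over every
`U ∈ 𝒰`, a `k`-module `𝔞_u(B, A)` of morphisms over every `u : U ⟶ U'` in `𝒰`, together
with associative, unital, `k`-bilinear composition maps. -/
structure GradedCat (𝒰 : Type u) [Category.{u} 𝒰] : Type (u + 1) where
  Obj : 𝒰 → Type u
  Hom : ∀ {X Y : 𝒰}, (X ⟶ Y) → Obj X → Obj Y → ModuleCat.{u} k
  comp : ∀ {X Y Z : 𝒰} {f : Y ⟶ Z} {g : X ⟶ Y} {C : Obj X} {B : Obj Y} {A : Obj Z},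
    Hom f B A → Hom g C B → Hom (g ≫ f) C A
  id : ∀ {X : 𝒰} (A : Obj X), Hom (𝟙 X) A A
  comp_add_left : ∀ {X Y Z : 𝒰} {f : Y ⟶ Z} {g : X ⟶ Y} {C : Obj X} {B : Obj Y}
    {A : Obj Z} (x x' : Hom f B A) (y : Hom g C B),
    comp (x + x') y = comp x y + comp x' y
  comp_add_right : ∀ {X Y Z : 𝒰} {f : Y ⟶ Z} {g : X ⟶ Y} {C : Obj X} {B : Obj Y}
    {A : Obj Z} (x : Hom f B A) (y y' : Hom g C B),
    comp x (y + y') = comp x y + comp x y'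
  comp_smul_left : ∀ {X Y Z : 𝒰} {f : Y ⟶ Z} {g : X ⟶ Y} {C : Obj X} {B : Obj Y}
    {A : Obj Z} (r : k) (x : Hom f B A) (y : Hom g C B),
    comp (r • x) y = r • comp x y
  comp_smul_right : ∀ {X Y Z : 𝒰} {f : Y ⟶ Z} {g : X ⟶ Y} {C : Obj X} {B : Obj Y}
    {A : Obj Z} (r : k) (x : Hom f B A) (y : Hom g C B),
    comp x (r • y) = r • comp x y
  comp_id : ∀ {X Y : 𝒰} {f : X ⟶ Y} {B : Obj X} {A : Obj Y} (x : Hom f B A),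
    HEq (comp x (id B)) x
  id_comp : ∀ {X Y : 𝒰} {f : X ⟶ Y} {B : Obj X} {A : Obj Y} (x : Hom f B A),
    HEq (comp (id A) x) x
  assoc : ∀ {W X Y Z : 𝒰} {f : Y ⟶ Z} {g : X ⟶ Y} {h : W ⟶ X} {D : Obj W} {C : Obj X}
    {B : Obj Y} {A : Obj Z} (x : Hom f B A) (y : Hom g C B) (z : Hom h D C),
    HEq (comp (comp x y) z) (comp x (comp y z))

variable {k}
variable {𝒰 : Type u} [Category.{u} 𝒰]

namespace GradedCat

variable (𝔞 : GradedCat k 𝒰)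

/-- Transport of graded morphisms along an equality of underlying morphisms of `𝒰`. -/
def Hcast {X Y : 𝒰} {f g : X ⟶ Y} (h : f = g) {B : 𝔞.Obj X} {A : 𝔞.Obj Y}
    (x : 𝔞.Hom f B A) : 𝔞.Hom g B A :=
  _root_.cast (by rw [h]) x

theorem Hcast_heq {X Y : 𝒰} {f g : X ⟶ Y} (h : f = g) {B : 𝔞.Obj X} {A : 𝔞.Obj Y}
    (x : 𝔞.Hom f B A) : HEq (𝔞.Hcast h x) x :=
  cast_heq _ _

theorem Hcast_add {X Y : 𝒰} {f g : X ⟶ Y} (h : f = g) {B : 𝔞.Obj X} {A : 𝔞.Obj Y}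
    (x y : 𝔞.Hom f B A) : 𝔞.Hcast h (x + y) = 𝔞.Hcast h x + 𝔞.Hcast h y := by
  subst h; rfl

theorem Hcast_smul {X Y : 𝒰} {f g : X ⟶ Y} (h : f = g) {B : 𝔞.Obj X} {A : 𝔞.Obj Y}
    (r : k) (x : 𝔞.Hom f B A) : 𝔞.Hcast h (r • x) = r • 𝔞.Hcast h x := by
  subst h; rfl

theorem comp_congr {X Y Z : 𝒰} {f f' : Y ⟶ Z} (hf : f = f') {g g' : X ⟶ Y} (hg : g = g')
    {C : 𝔞.Obj X} {B : 𝔞.Obj Y} {A : 𝔞.Obj Z} {x : 𝔞.Hom f B A} {x' : 𝔞.Hom f' B A}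
    (hx : HEq x x') {y : 𝔞.Hom g C B} {y' : 𝔞.Hom g' C B} (hy : HEq y y') :
    HEq (𝔞.comp x y) (𝔞.comp x' y') := by
  subst hf; subst hg; rw [eq_of_heq hx, eq_of_heq hy]

end GradedCat

variable {𝒱 : Type u} [Category.{u} 𝒱]

/-- The `𝒱`-graded category `𝔞^φ` obtained by restricting a `𝒰`-graded category `𝔞`
along a functor `φ : 𝒱 ⥤ 𝒰`:  `(𝔞^φ)_V = 𝔞_{φ V}` and `(𝔞^φ)_v(A, A') = 𝔞_{φ v}(A, A')`. -/
def GradedCat.restrict (φ : 𝒱 ⥤ 𝒰) (𝔞 : GradedCat k 𝒰) : GradedCat k 𝒱 where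
  Obj V := 𝔞.Obj (φ.obj V)
  Hom f B A := 𝔞.Hom (φ.map f) B A
  comp x y := 𝔞.Hcast (φ.map_comp _ _).symm (𝔞.comp x y)
  id A := 𝔞.Hcast (φ.map_id _).symm (𝔞.id A)
  comp_add_left x x' y := by (try dsimp only); rw [𝔞.comp_add_left, 𝔞.Hcast_add]
  comp_add_right x y y' := by (try dsimp only); rw [𝔞.comp_add_right, 𝔞.Hcast_add]
  comp_smul_left r x y := by (try dsimp only); rw [𝔞.comp_smul_left, 𝔞.Hcast_smul]
  comp_smul_right r x y := by (try dsimp only); rw [𝔞.comp_smul_right, 𝔞.Hcast_smul]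
  comp_id x :=
    ((𝔞.Hcast_heq _ _).trans
      ((𝔞.comp_congr rfl (φ.map_id _) HEq.rfl (𝔞.Hcast_heq _ _)).trans (𝔞.comp_id _)))
  id_comp x :=
    ((𝔞.Hcast_heq _ _).trans
      ((𝔞.comp_congr (φ.map_id _) rfl (𝔞.Hcast_heq _ _) HEq.rfl).trans (𝔞.id_comp _)))
  assoc x y z := by
    refine ((𝔞.Hcast_heq _ _).trans ?_).trans (𝔞.Hcast_heq _ _).symm
    refine ((𝔞.comp_congr (φ.map_comp _ _) rfl (𝔞.Hcast_heq _ _) HEq.rfl).trans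
      (𝔞.assoc _ _ _)).trans ?_
    exact 𝔞.comp_congr rfl (φ.map_comp _ _).symm HEq.rfl (𝔞.Hcast_heq _ _).symm

variable (k)

/-- A graded functor `(φ, F) : (𝒱, 𝔟) → (𝒰, 𝔞)` over a functor `φ : 𝒱 ⥤ 𝒰`: maps
`F_V : 𝔟_V → 𝔞_{φ V}` on objects and `k`-linear maps `𝔟_v(B, B') → 𝔞_{φ v}(F B, F B')`
on graded morphisms, preserving composition and identities. -/
structure GradedFunctor (φ : 𝒱 ⥤ 𝒰) (𝔟 : GradedCat k 𝒱) (𝔞 : GradedCat k 𝒰) :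
    Type u where
  obj : ∀ {V : 𝒱}, 𝔟.Obj V → 𝔞.Obj (φ.obj V)
  map : ∀ {V V' : 𝒱} (f : V ⟶ V') {B : 𝔟.Obj V} {B' : 𝔟.Obj V'},
    𝔟.Hom f B B' → 𝔞.Hom (φ.map f) (obj B) (obj B')
  map_add : ∀ {V V' : 𝒱} (f : V ⟶ V') {B : 𝔟.Obj V} {B' : 𝔟.Obj V'}
    (x y : 𝔟.Hom f B B'), map f (x + y) = map f x + map f y
  map_smul : ∀ {V V' : 𝒱} (f : V ⟶ V') {B : 𝔟.Obj V} {B' : 𝔟.Obj V'} (r : k)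
    (x : 𝔟.Hom f B B'), map f (r • x) = r • map f x
  map_id : ∀ {V : 𝒱} (B : 𝔟.Obj V), HEq (map (𝟙 V) (𝔟.id B)) (𝔞.id (obj B))
  map_comp : ∀ {V V' V'' : 𝒱} {f : V' ⟶ V''} {g : V ⟶ V'} {C : 𝔟.Obj V} {B : 𝔟.Obj V'}
    {A : 𝔟.Obj V''} (x : 𝔟.Hom f B A) (y : 𝔟.Hom g C B),
    HEq (map (g ≫ f) (𝔟.comp x y)) (𝔞.comp (map f x) (map g y))

variable {k}

namespace GradedFunctor

variable {φ : 𝒱 ⥤ 𝒰} {𝔟 : GradedCat k 𝒱} {𝔞 : GradedCat k 𝒰}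

theorem map_congr (F : GradedFunctor k φ 𝔟 𝔞) {V V' : 𝒱} {f g : V ⟶ V'} (hfg : f = g)
    {B : 𝔟.Obj V} {B' : 𝔟.Obj V'} {x : 𝔟.Hom f B B'} {y : 𝔟.Hom g B B'} (h : HEq x y) :
    HEq (F.map f x) (F.map g y) := by
  subst hfg; rw [eq_of_heq h]

/-- A graded functor is subcartesian (cartesian with respect to `Map → Mas`) iff all its
maps between graded `Hom`-modules are bijective. -/
def Subcartesian (F : GradedFunctor k φ 𝔟 𝔞) : Prop :=
  ∀ {V V' : 𝒱} (f : V ⟶ V') (B : 𝔟.Obj V) (B' : 𝔟.Obj V'),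
    Function.Bijective (fun x : 𝔟.Hom f B B' => F.map f x)

variable {𝒲 : Type u} [Category.{u} 𝒲] {ψ : 𝒲 ⥤ 𝒱} {𝔠 : GradedCat k 𝒲}

/-- Composition of graded functors. -/
def comp (F : GradedFunctor k φ 𝔟 𝔞) (G : GradedFunctor k ψ 𝔠 𝔟) :
    GradedFunctor k (ψ ⋙ φ) 𝔠 𝔞 where
  obj C := F.obj (G.obj C)
  map := fun {V V'} f {B B'} x => F.map (ψ.map f) (G.map f x)
  map_add := by intro V V' f B B' x y; (try dsimp only); rw [G.map_add, F.map_add]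
  map_smul := by intro V V' f B B' r x; (try dsimp only); rw [G.map_smul, F.map_smul]
  map_id B := (F.map_congr (ψ.map_id _) (G.map_id _)).trans (F.map_id _)
  map_comp x y := (F.map_congr (ψ.map_comp _ _) (G.map_comp _ _)).trans (F.map_comp _ _)

end GradedFunctor

/-- The canonical cartesian graded functor `δ^{φ,𝔞} : (𝒱, 𝔞^φ) → (𝒰, 𝔞)`. -/
def restrictProj (φ : 𝒱 ⥤ 𝒰) (𝔞 : GradedCat k 𝒰) :
    GradedFunctor k φ (𝔞.restrict φ) 𝔞 where
  obj A := A
  map := fun {V V'} _f {B B'} x => x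
  map_add := by intros; rfl
  map_smul := by intros; rfl
  map_id B := 𝔞.Hcast_heq (φ.map_id _).symm (𝔞.id B)
  map_comp x y := 𝔞.Hcast_heq (φ.map_comp _ _).symm (𝔞.comp x y)

theorem restrictProj_subcartesian (φ : 𝒱 ⥤ 𝒰) (𝔞 : GradedCat k 𝒰) :
    (restrictProj φ 𝔞).Subcartesian := by
  intro V V' f B B'
  constructor
  · intro a b h
    exact h
  · intro y
    exact ⟨y, rfl⟩

end MapGr

namespace MapGr

variable {k : Type u} [CommRing k]
variable {𝒰 : Type u} [Category.{u} 𝒰]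

/-- The category `𝒰^♯` associated to a `𝒰`-graded category `𝔞`: objects are pairs
`(U, A)` with `A ∈ 𝔞_U`, and morphisms `(U, A) → (U', A')` are the morphisms `U ⟶ U'`
of `𝒰`. -/
def Sh (𝔞 : GradedCat k 𝒰) : Type u := Σ X : 𝒰, 𝔞.Obj X

instance (𝔞 : GradedCat k 𝒰) : Category.{u} (Sh 𝔞) where
  Hom A B := A.1 ⟶ B.1
  id A := 𝟙 A.1
  comp f g := f ≫ g
  id_comp := by intros; simp
  comp_id := by intros; simp
  assoc := by intros; simp

/-- The underlying morphism of `𝒰` of a morphism of `𝒰^♯`. -/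
def Sh.base {𝔞 : GradedCat k 𝒰} {A B : Sh 𝔞} (f : A ⟶ B) : A.1 ⟶ B.1 := f

@[simp] theorem Sh.base_id {𝔞 : GradedCat k 𝒰} (A : Sh 𝔞) :
    Sh.base (𝟙 A) = 𝟙 A.1 := rfl

@[simp] theorem Sh.base_comp {𝔞 : GradedCat k 𝒰} {A B C : Sh 𝔞} (f : A ⟶ B) (g : B ⟶ C) :
    Sh.base (f ≫ g) = Sh.base f ≫ Sh.base g := rfl

/-- `n`-simplices of the simplicial nerve of a category with specified endpoints:
strings `X = X₀ → X₁ → ⋯ → Xₙ = Y` of `n` composable morphisms. -/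
inductive Pth (C : Type u) [Category.{u} C] : ℕ → C → C → Type u
  | nil (X : C) : Pth C 0 X X
  | cons {n : ℕ} {X Y Z : C} (f : X ⟶ Y) (p : Pth C n Y Z) : Pth C (n + 1) X Z

/-- The composite `|u| = uₙ₋₁ ⋯ u₁ u₀` of a string of composable morphisms. -/
def Pth.comp {C : Type u} [Category.{u} C] : ∀ {n : ℕ} {X Y : C}, Pth C n X Y → (X ⟶ Y)
  | _, _, _, .nil X => 𝟙 X
  | _, _, _, .cons f p => f ≫ p.comp

@[simp] theorem Pth.comp_nil {C : Type u} [Category.{u} C] (X : C) :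
    (Pth.nil X).comp = 𝟙 X := rfl

@[simp] theorem Pth.comp_cons {C : Type u} [Category.{u} C] {n : ℕ} {X Y Z : C}
    (f : X ⟶ Y) (p : Pth C n Y Z) : (Pth.cons f p).comp = f ≫ p.comp := rfl

/-- The map induced by a functor on simplices of the nerves. -/
def Pth.map {C D : Type u} [Category.{u} C] [Category.{u} D] (F : C ⥤ D) :
    ∀ {n : ℕ} {X Y : C}, Pth C n X Y → Pth D n (F.obj X) (F.obj Y)
  | _, _, _, .nil X => .nil _
  | _, _, _, .cons f p => .cons (F.map f) (p.map F)

theorem Pth.comp_map {C D : Type u} [Category.{u} C] [Category.{u} D] (F : C ⥤ D)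
    {n : ℕ} {X Y : C} (p : Pth C n X Y) : (p.map F).comp = F.map p.comp := by
  induction p with
  | nil => simp [Pth.map]
  | cons f p ih => simp [Pth.map, ih]

/-- The set of `n`-simplices of the nerve `𝒩(𝔞) = 𝒩(𝒰^♯)` of a graded category. -/
def NerveTot (C : Type u) [Category.{u} C] (m : ℕ) : Type u :=
  Σ (X : C) (Y : C), Pth C m X Y

/-- The map induced by a functor on the set of `n`-simplices of the nerves. -/
def NerveTot.map {C D : Type u} [Category.{u} C] [Category.{u} D] (F : C ⥤ D) {m : ℕ}
    (s : NerveTot C m) : NerveTot D m :=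
  ⟨F.obj s.1, F.obj s.2.1, Pth.map F s.2.2⟩

/-- A family of elements of the graded `Hom`-modules of `𝔞` lying over a simplex of the
nerve of `𝔞`. -/
inductive PthElts {k : Type u} [CommRing k] {𝒰 : Type u} [Category.{u} 𝒰]
    (𝔞 : GradedCat k 𝒰) : ∀ {n : ℕ} {X Y : Sh 𝔞}, Pth (Sh 𝔞) n X Y → Type u
  | nil (X : Sh 𝔞) : PthElts 𝔞 (Pth.nil X)
  | cons {n : ℕ} {X Y Z : Sh 𝔞} {f : X ⟶ Y} {p : Pth (Sh 𝔞) n Y Z}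
      (x : 𝔞.Hom (Sh.base f) X.2 Y.2) (e : PthElts 𝔞 p) : PthElts 𝔞 (Pth.cons f p)

variable (k)

/-- An `𝔞`-bimodule `M`: `k`-modules `M_u(B, A)` together with associative, unital,
`k`-bilinear left and right actions of `𝔞`. -/
structure Bimod {𝒰 : Type u} [Category.{u} 𝒰] (𝔞 : GradedCat k 𝒰) : Type (u + 1) where
  M : ∀ {X Y : 𝒰}, (X ⟶ Y) → 𝔞.Obj X → 𝔞.Obj Y → ModuleCat.{u} k
  actL : ∀ {X Y Z : 𝒰} {f : Y ⟶ Z} {g : X ⟶ Y} {B : 𝔞.Obj X} {A : 𝔞.Obj Y}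
    {A' : 𝔞.Obj Z}, 𝔞.Hom f A A' → M g B A → M (g ≫ f) B A'
  actR : ∀ {X Y Z : 𝒰} {f : Y ⟶ Z} {g : X ⟶ Y} {B' : 𝔞.Obj X} {B : 𝔞.Obj Y}
    {A : 𝔞.Obj Z}, M f B A → 𝔞.Hom g B' B → M (g ≫ f) B' A
  actL_add_left : ∀ {X Y Z : 𝒰} {f : Y ⟶ Z} {g : X ⟶ Y} {B : 𝔞.Obj X} {A : 𝔞.Obj Y}
    {A' : 𝔞.Obj Z} (x x' : 𝔞.Hom f A A') (m : M g B A),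
    actL (x + x') m = actL x m + actL x' m
  actL_add_right : ∀ {X Y Z : 𝒰} {f : Y ⟶ Z} {g : X ⟶ Y} {B : 𝔞.Obj X} {A : 𝔞.Obj Y}
    {A' : 𝔞.Obj Z} (x : 𝔞.Hom f A A') (m m' : M g B A),
    actL x (m + m') = actL x m + actL x m'
  actL_smul_left : ∀ {X Y Z : 𝒰} {f : Y ⟶ Z} {g : X ⟶ Y} {B : 𝔞.Obj X} {A : 𝔞.Obj Y}
    {A' : 𝔞.Obj Z} (r : k) (x : 𝔞.Hom f A A') (m : M g B A),
    actL (r • x) m = r • actL x m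
  actL_smul_right : ∀ {X Y Z : 𝒰} {f : Y ⟶ Z} {g : X ⟶ Y} {B : 𝔞.Obj X} {A : 𝔞.Obj Y}
    {A' : 𝔞.Obj Z} (r : k) (x : 𝔞.Hom f A A') (m : M g B A),
    actL x (r • m) = r • actL x m
  actR_add_left : ∀ {X Y Z : 𝒰} {f : Y ⟶ Z} {g : X ⟶ Y} {B' : 𝔞.Obj X} {B : 𝔞.Obj Y}
    {A : 𝔞.Obj Z} (m m' : M f B A) (y : 𝔞.Hom g B' B),
    actR (m + m') y = actR m y + actR m' y
  actR_add_right : ∀ {X Y Z : 𝒰} {f : Y ⟶ Z} {g : X ⟶ Y} {B' : 𝔞.Obj X} {B : 𝔞.Obj Y}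
    {A : 𝔞.Obj Z} (m : M f B A) (y y' : 𝔞.Hom g B' B),
    actR m (y + y') = actR m y + actR m y'
  actR_smul_left : ∀ {X Y Z : 𝒰} {f : Y ⟶ Z} {g : X ⟶ Y} {B' : 𝔞.Obj X} {B : 𝔞.Obj Y}
    {A : 𝔞.Obj Z} (r : k) (m : M f B A) (y : 𝔞.Hom g B' B),
    actR (r • m) y = r • actR m y
  actR_smul_right : ∀ {X Y Z : 𝒰} {f : Y ⟶ Z} {g : X ⟶ Y} {B' : 𝔞.Obj X} {B : 𝔞.Obj Y}
    {A : 𝔞.Obj Z} (r : k) (m : M f B A) (y : 𝔞.Hom g B' B),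
    actR m (r • y) = r • actR m y
  actL_id : ∀ {X Y : 𝒰} {g : X ⟶ Y} {B : 𝔞.Obj X} {A : 𝔞.Obj Y} (m : M g B A),
    HEq (actL (𝔞.id A) m) m
  actR_id : ∀ {X Y : 𝒰} {f : X ⟶ Y} {B : 𝔞.Obj X} {A : 𝔞.Obj Y} (m : M f B A),
    HEq (actR m (𝔞.id B)) m
  actL_actL : ∀ {W X Y Z : 𝒰} {f' : Y ⟶ Z} {f : X ⟶ Y} {g : W ⟶ X} {B : 𝔞.Obj W}
    {A : 𝔞.Obj X} {A' : 𝔞.Obj Y} {A'' : 𝔞.Obj Z} (x : 𝔞.Hom f' A' A'')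
    (y : 𝔞.Hom f A A') (m : M g B A),
    HEq (actL x (actL y m)) (actL (𝔞.comp x y) m)
  actR_actR : ∀ {W X Y Z : 𝒰} {f : Y ⟶ Z} {g : X ⟶ Y} {h : W ⟶ X} {B'' : 𝔞.Obj W}
    {B' : 𝔞.Obj X} {B : 𝔞.Obj Y} {A : 𝔞.Obj Z} (m : M f B A) (y : 𝔞.Hom g B' B)
    (y' : 𝔞.Hom h B'' B'),
    HEq (actR (actR m y) y') (actR m (𝔞.comp y y'))
  actL_actR : ∀ {W X Y Z : 𝒰} {f : Y ⟶ Z} {g : X ⟶ Y} {h : W ⟶ X} {B' : 𝔞.Obj W}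
    {B : 𝔞.Obj X} {A : 𝔞.Obj Y} {A' : 𝔞.Obj Z} (x : 𝔞.Hom f A A') (m : M g B A)
    (y : 𝔞.Hom h B' B),
    HEq (actL x (actR m y)) (actR (actL x m) y)

variable {k}

namespace Bimod

variable {𝔞 : GradedCat k 𝒰} (M : Bimod k 𝔞)

/-- Transport of bimodule elements along an equality of underlying morphisms of `𝒰`. -/
def cst {X Y : 𝒰} {f g : X ⟶ Y} (h : f = g) {B : 𝔞.Obj X} {A : 𝔞.Obj Y}
    (m : M.M f B A) : M.M g B A :=
  _root_.cast (by rw [h]) m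

theorem cst_heq {X Y : 𝒰} {f g : X ⟶ Y} (h : f = g) {B : 𝔞.Obj X} {A : 𝔞.Obj Y}
    (m : M.M f B A) : HEq (M.cst h m) m :=
  cast_heq _ _

theorem cst_add {X Y : 𝒰} {f g : X ⟶ Y} (h : f = g) {B : 𝔞.Obj X} {A : 𝔞.Obj Y}
    (m m' : M.M f B A) : M.cst h (m + m') = M.cst h m + M.cst h m' := by
  subst h; rfl

theorem cst_smul {X Y : 𝒰} {f g : X ⟶ Y} (h : f = g) {B : 𝔞.Obj X} {A : 𝔞.Obj Y}
    (r : k) (m : M.M f B A) : M.cst h (r • m) = r • M.cst h m := by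
  subst h; rfl

theorem actL_congr {X Y Z : 𝒰} {f f' : Y ⟶ Z} (hf : f = f') {g g' : X ⟶ Y}
    (hg : g = g') {B : 𝔞.Obj X} {A : 𝔞.Obj Y} {A' : 𝔞.Obj Z} {x : 𝔞.Hom f A A'}
    {x' : 𝔞.Hom f' A A'} (hx : HEq x x') {m : M.M g B A} {m' : M.M g' B A}
    (hm : HEq m m') : HEq (M.actL x m) (M.actL x' m') := by
  subst hf; subst hg; rw [eq_of_heq hx, eq_of_heq hm]

theorem actR_congr {X Y Z : 𝒰} {f f' : Y ⟶ Z} (hf : f = f') {g g' : X ⟶ Y}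
    (hg : g = g') {B' : 𝔞.Obj X} {B : 𝔞.Obj Y} {A : 𝔞.Obj Z} {m : M.M f B A}
    {m' : M.M f' B A} (hm : HEq m m') {y : 𝔞.Hom g B' B} {y' : 𝔞.Hom g' B' B}
    (hy : HEq y y') : HEq (M.actR m y) (M.actR m' y') := by
  subst hf; subst hg; rw [eq_of_heq hm, eq_of_heq hy]

end Bimod

/-- The identity bimodule `1_𝔞`. -/
def GradedCat.unit (𝔞 : GradedCat k 𝒰) : Bimod k 𝔞 where
  M := 𝔞.Hom
  actL := 𝔞.comp
  actR := 𝔞.comp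
  actL_add_left := 𝔞.comp_add_left
  actL_add_right := 𝔞.comp_add_right
  actL_smul_left := 𝔞.comp_smul_left
  actL_smul_right := 𝔞.comp_smul_right
  actR_add_left := 𝔞.comp_add_left
  actR_add_right := 𝔞.comp_add_right
  actR_smul_left := 𝔞.comp_smul_left
  actR_smul_right := 𝔞.comp_smul_right
  actL_id := 𝔞.id_comp
  actR_id := 𝔞.comp_id
  actL_actL x y m := (𝔞.assoc x y m).symm
  actR_actR m y y' := 𝔞.assoc m y y'
  actL_actR x m y := (𝔞.assoc x m y).symm

variable {𝒱 : Type u} [Category.{u} 𝒱]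

/-- The pullback `F*M` of an `𝔞`-bimodule along a graded functor
`(φ, F) : (𝒱, 𝔟) → (𝒰, 𝔞)`: `(F*M)_v(B, B') = M_{φ v}(F B, F B')`. -/
def Bimod.pullback {φ : 𝒱 ⥤ 𝒰} {𝔟 : GradedCat k 𝒱} {𝔞 : GradedCat k 𝒰}
    (F : GradedFunctor k φ 𝔟 𝔞) (M : Bimod k 𝔞) : Bimod k 𝔟 where
  M f B B' := M.M (φ.map f) (F.obj B) (F.obj B')
  actL := fun {X Y Z f g B A A'} x m =>
    M.cst (φ.map_comp g f).symm (M.actL (F.map f x) m)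
  actR := fun {X Y Z f g B' B A} m y =>
    M.cst (φ.map_comp g f).symm (M.actR m (F.map g y))
  actL_add_left := by
    intros; (try dsimp only); rw [F.map_add, M.actL_add_left, M.cst_add]
  actL_add_right := by
    intros; (try dsimp only); rw [M.actL_add_right, M.cst_add]
  actL_smul_left := by
    intros; (try dsimp only); rw [F.map_smul, M.actL_smul_left, M.cst_smul]
  actL_smul_right := by
    intros; (try dsimp only); rw [M.actL_smul_right, M.cst_smul]
  actR_add_left := by
    intros; (try dsimp only); rw [M.actR_add_left, M.cst_add]
  actR_add_right := by
    intros; (try dsimp only); rw [F.map_add, M.actR_add_right, M.cst_add]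
  actR_smul_left := by
    intros; (try dsimp only); rw [M.actR_smul_left, M.cst_smul]
  actR_smul_right := by
    intros; (try dsimp only); rw [F.map_smul, M.actR_smul_right, M.cst_smul]
  actL_id := by
    intro X Y g B A m; (try dsimp only)
    exact (M.cst_heq _ _).trans
      ((M.actL_congr (φ.map_id _) rfl (F.map_id _) HEq.rfl).trans (M.actL_id m))
  actR_id := by
    intro X Y f B A m; (try dsimp only)
    exact (M.cst_heq _ _).trans
      ((M.actR_congr rfl (φ.map_id _) HEq.rfl (F.map_id _)).trans (M.actR_id m))
  actL_actL := by
    intro W X Y Z f' f g B A A' A'' x y m; (try dsimp only)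
    refine ((M.cst_heq _ _).trans ?_).trans (M.cst_heq _ _).symm
    refine ((M.actL_congr rfl (φ.map_comp _ _) HEq.rfl (M.cst_heq _ _)).trans
      (M.actL_actL _ _ _)).trans ?_
    exact M.actL_congr (φ.map_comp _ _).symm rfl (F.map_comp _ _).symm HEq.rfl
  actR_actR := by
    intro W X Y Z f g h B'' B' B A m y y'; (try dsimp only)
    refine ((M.cst_heq _ _).trans ?_).trans (M.cst_heq _ _).symm
    refine ((M.actR_congr (φ.map_comp _ _) rfl (M.cst_heq _ _) HEq.rfl).trans
      (M.actR_actR _ _ _)).trans ?_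
    exact M.actR_congr rfl (φ.map_comp _ _).symm HEq.rfl (F.map_comp _ _).symm
  actL_actR := by
    intro W X Y Z f g h B' B A A' x m y; (try dsimp only)
    refine ((M.cst_heq _ _).trans ?_).trans (M.cst_heq _ _).symm
    refine ((M.actL_congr rfl (φ.map_comp _ _) HEq.rfl (M.cst_heq _ _)).trans
      (M.actL_actR _ _ _)).trans ?_
    exact M.actR_congr (φ.map_comp _ _).symm rfl (M.cst_heq _ _).symm HEq.rfl

/-- The functor `𝒱^♯ ⥤ 𝒰^♯` induced by a graded functor. -/
def sharpF {φ : 𝒱 ⥤ 𝒰} {𝔟 : GradedCat k 𝒱} {𝔞 : GradedCat k 𝒰}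
    (F : GradedFunctor k φ 𝔟 𝔞) : Sh 𝔟 ⥤ Sh 𝔞 where
  obj X := ⟨φ.obj X.1, F.obj X.2⟩
  map {X Y} f := φ.map (Sh.base f)
  map_id X := φ.map_id X.1
  map_comp f g := φ.map_comp _ _

/-- The map induced by a graded functor on families of elements over simplices. -/
def eltsMap {φ : 𝒱 ⥤ 𝒰} {𝔟 : GradedCat k 𝒱} {𝔞 : GradedCat k 𝒰}
    (F : GradedFunctor k φ 𝔟 𝔞) :
    ∀ {n : ℕ} {X Y : Sh 𝔟} {p : Pth (Sh 𝔟) n X Y},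
      PthElts 𝔟 p → PthElts 𝔞 (p.map (sharpF F))
  | _, _, _, _, .nil X => .nil _
  | _, _, _, _, .cons x e => .cons (F.map _ x) (eltsMap F e)

/-- The module of raw Hochschild `n`-cochains of `(𝒰, 𝔞)` with values in an
`𝔞`-bimodule `M`: families, indexed by the `n`-simplices `(u, A)` of `𝒩(𝔞)`, of maps
`𝔞_{u_{n-1}} ⊗ ⋯ ⊗ 𝔞_{u_0} → M_{|u|}(A₀, Aₙ)` (multilinearity is the separate
predicate `IsCochain`). -/
abbrev RawCochain {𝔞 : GradedCat k 𝒰} (M : Bimod k 𝔞) (n : ℕ) : Type u :=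
  ∀ (X Y : Sh 𝔞) (p : Pth (Sh 𝔞) n X Y), PthElts 𝔞 p → M.M (Sh.base p.comp) X.2 Y.2

/-- Restriction of Hochschild cochains along a graded functor, with values in the
pullback bimodule: `(F*ψ)_{(v,B)} = ψ_{(φ v, F B)} ∘ F^{⊗n}`. -/
def Fstar {φ : 𝒱 ⥤ 𝒰} {𝔟 : GradedCat k 𝒱} {𝔞 : GradedCat k 𝒰}
    (F : GradedFunctor k φ 𝔟 𝔞) (M : Bimod k 𝔞) {n : ℕ} (c : RawCochain M n) :
    RawCochain (Bimod.pullback F M) n :=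
  fun X Y p e =>
    M.cst (by rw [Pth.comp_map]; rfl) (c _ _ (p.map (sharpF F)) (eltsMap F e))

/-- Restriction of Hochschild cochains (with values in the identity bimodules) along a
subcartesian graded functor: `(F*ψ)_{(v,B)} = F⁻¹ ∘ ψ_{(φ v, F B)} ∘ F^{⊗n}`. -/
noncomputable def FstarUnit {φ : 𝒱 ⥤ 𝒰} {𝔟 : GradedCat k 𝒱} {𝔞 : GradedCat k 𝒰}
    (F : GradedFunctor k φ 𝔟 𝔞) (hF : F.Subcartesian) {n : ℕ}
    (c : RawCochain 𝔞.unit n) : RawCochain 𝔟.unit n :=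
  fun X Y p e =>
    (Equiv.ofBijective _ (hF (Sh.base p.comp) X.2 Y.2)).symm
      ((𝔞.unit).cst (by rw [Pth.comp_map]; rfl) (c _ _ (p.map (sharpF F)) (eltsMap F e)))

section Multilinear

variable {𝔞 : GradedCat k 𝒰} (M : Bimod k 𝔞)

/-- The multilinearity predicate for (relative) Hochschild cochains: additivity and
`k`-homogeneity in the first slot, and, recursively, multilinearity of all partial
evaluations. -/
def IsML : ∀ {n : ℕ} {W : 𝒰} {B : 𝔞.Obj W} {Y : Sh 𝔞} {v : W ⟶ Y.1},
    (∀ (Z : Sh 𝔞) (q : Pth (Sh 𝔞) n Y Z), PthElts 𝔞 q →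
      M.M (v ≫ Sh.base q.comp) B Z.2) → Prop
  | 0, _, _, _, _, _ => True
  | n + 1, W, B, Y, v, c =>
      (∀ (Y' Z : Sh 𝔞) (a : Y ⟶ Y') (q : Pth (Sh 𝔞) n Y' Z) (e : PthElts 𝔞 q)
        (x x' : 𝔞.Hom (Sh.base a) Y.2 Y'.2),
        c Z (.cons a q) (.cons (x + x') e) =
          c Z (.cons a q) (.cons x e) + c Z (.cons a q) (.cons x' e)) ∧
      (∀ (Y' Z : Sh 𝔞) (a : Y ⟶ Y') (q : Pth (Sh 𝔞) n Y' Z) (e : PthElts 𝔞 q) (r : k)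
        (x : 𝔞.Hom (Sh.base a) Y.2 Y'.2),
        c Z (.cons a q) (.cons (r • x) e) = r • c Z (.cons a q) (.cons x e)) ∧
      (∀ (Y' : Sh 𝔞) (a : Y ⟶ Y') (x : 𝔞.Hom (Sh.base a) Y.2 Y'.2),
        IsML (v := v ≫ Sh.base a)
          (fun Z q e => M.cst (by simp) (c Z (.cons a q) (.cons x e))))

/-- A raw cochain, viewed as a relative cochain. -/
def toRel {n : ℕ} (c : RawCochain M n) (X : Sh 𝔞) :
    ∀ (Z : Sh 𝔞) (q : Pth (Sh 𝔞) n X Z), PthElts 𝔞 q →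
      M.M (𝟙 X.1 ≫ Sh.base q.comp) X.2 Z.2 :=
  fun Z q e => M.cst (by simp) (c X Z q e)

/-- A raw cochain is a genuine Hochschild cochain if it is multilinear. -/
def IsCochain {n : ℕ} (c : RawCochain M n) : Prop :=
  ∀ X : Sh 𝔞, IsML M (toRel M c X)

end Multilinear

section Differential

variable {𝔞 : GradedCat k 𝒰}

/-- The inductive core of the Hochschild differential: `χ` is the relative cochain with
the already-consumed prefix applied, and `G` records the evaluation with the last
morphism of the prefix composed into the first remaining slot (initially, the right
action on the source). -/
def hochD (M : Bimod k 𝔞) {W : 𝒰} (B : 𝔞.Obj W) :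
    ∀ {m : ℕ} {Y Z : Sh 𝔞} (v : W ⟶ Y.1)
      (χ : ∀ (Z' : Sh 𝔞) (q : Pth (Sh 𝔞) m Y Z'), PthElts 𝔞 q →
        M.M (v ≫ Sh.base q.comp) B Z'.2)
      (G : ∀ (Y' Z' : Sh 𝔞) (c : Y ⟶ Y') (z : 𝔞.Hom (Sh.base c) Y.2 Y'.2)
        (q : Pth (Sh 𝔞) m Y' Z'), PthElts 𝔞 q →
        M.M (v ≫ (Sh.base c ≫ Sh.base q.comp)) B Z'.2)
      (p : Pth (Sh 𝔞) (m + 1) Y Z) (e : PthElts 𝔞 p),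
      M.M (v ≫ Sh.base p.comp) B Z.2
  | 0, Y, Z, v, χ, G, .cons a (.nil _), .cons x e' =>
      G _ _ a x (.nil _) e' - M.cst (by simp) (M.actL x (χ _ (.nil _) (.nil _)))
  | m + 1, Y, Z, v, χ, G, .cons a q, .cons x e' =>
      G _ _ a x q e' -
        M.cst (by simp)
          (hochD M B (v ≫ Sh.base a)
            (fun Z' r er => M.cst (by simp) (χ Z' (.cons a r) (.cons x er)))
            (fun Y'' Z' c z r er =>
              M.cst (by simp) (χ Z' (.cons (a ≫ c) r) (.cons (𝔞.comp z x) er)))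
            q e')

/-- The simplicial Hochschild differential on raw cochains. -/
def dRaw (M : Bimod k 𝔞) {n : ℕ} (c : RawCochain M n) : RawCochain M (n + 1) :=
  fun X Z p e =>
    M.cst (by simp)
      (hochD M X.2 (𝟙 X.1)
        (fun Z' q eq => M.cst (by simp) (c X Z' q eq))
        (fun Y' Z' a z q eq => M.cst (by simp) (M.actR (c Y' Z' q eq) z))
        p e)

end Differential

end MapGr

namespace MapGr

variable {k : Type u} [CommRing k]
variable {𝒰 : Type u} [Category.{u} 𝒰]

/-- The identity graded functor of a map-graded category. -/
def GradedFunctor.gid (𝔞 : GradedCat k 𝒰) : GradedFunctor k (𝟭 𝒰) 𝔞 𝔞 where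
  obj A := A
  map := fun {V V'} _f {B B'} x => x
  map_add := by intros; rfl
  map_smul := by intros; rfl
  map_id _ := HEq.rfl
  map_comp _ _ := HEq.rfl

theorem GradedFunctor.gid_subcartesian (𝔞 : GradedCat k 𝒰) :
    (GradedFunctor.gid 𝔞).Subcartesian := by
  intro V V' f B B'
  exact ⟨fun a b h => h, fun y => ⟨y, rfl⟩⟩

/-! ### Auxiliary lemmas -/

section Aux

theorem GradedCat.add_congr {𝔞 : GradedCat k 𝒰} {X Y : 𝒰} {f f' : X ⟶ Y} (h : f = f')
    {B : 𝔞.Obj X} {A : 𝔞.Obj Y} {x y : 𝔞.Hom f B A} {x' y' : 𝔞.Hom f' B A}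
    (hx : HEq x x') (hy : HEq y y') : HEq (x + y) (x' + y') := by
  subst h; rw [eq_of_heq hx, eq_of_heq hy]

theorem GradedCat.sub_congr {𝔞 : GradedCat k 𝒰} {X Y : 𝒰} {f f' : X ⟶ Y} (h : f = f')
    {B : 𝔞.Obj X} {A : 𝔞.Obj Y} {x y : 𝔞.Hom f B A} {x' y' : 𝔞.Hom f' B A}
    (hx : HEq x x') (hy : HEq y y') : HEq (x - y) (x' - y') := by
  subst h; rw [eq_of_heq hx, eq_of_heq hy]

theorem GradedCat.smul_congr {𝔞 : GradedCat k 𝒰} {X Y : 𝒰} {f f' : X ⟶ Y} (h : f = f')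
    {B : 𝔞.Obj X} {A : 𝔞.Obj Y} (r : k) {x : 𝔞.Hom f B A} {x' : 𝔞.Hom f' B A}
    (hx : HEq x x') : HEq (r • x) (r • x') := by
  subst h; rw [eq_of_heq hx]

variable {𝒱 : Type u} [Category.{u} 𝒱] {φ : 𝒱 ⥤ 𝒰} {𝔟 : GradedCat k 𝒱}
  {𝔞 : GradedCat k 𝒰}

theorem GradedFunctor.map_sub (F : GradedFunctor k φ 𝔟 𝔞) {V V' : 𝒱} (f : V ⟶ V')
    {B : 𝔟.Obj V} {B' : 𝔟.Obj V'} (x y : 𝔟.Hom f B B') :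
    F.map f (x - y) = F.map f x - F.map f y := by
  rw [sub_eq_add_neg, ← neg_one_smul k y, F.map_add, F.map_smul, neg_one_smul,
    ← sub_eq_add_neg]

/-- `Sh.base ((p.map (sharpF F)).comp) = φ.map (Sh.base p.comp)`. -/
theorem base_comp_map (F : GradedFunctor k φ 𝔟 𝔞) {n : ℕ} {X Y : Sh 𝔟}
    (p : Pth (Sh 𝔟) n X Y) :
    Sh.base (p.map (sharpF F)).comp = φ.map (Sh.base p.comp) :=
  Pth.comp_map (sharpF F) p

/-- The defining property of `FstarUnit`. -/
theorem FstarUnit_spec (F : GradedFunctor k φ 𝔟 𝔞) (hF : F.Subcartesian) {n : ℕ}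
    (c : RawCochain 𝔞.unit n) (X Y : Sh 𝔟) (p : Pth (Sh 𝔟) n X Y) (e : PthElts 𝔟 p) :
    HEq (F.map (Sh.base p.comp) (FstarUnit F hF c X Y p e))
      (c ((sharpF F).obj X) ((sharpF F).obj Y) (p.map (sharpF F)) (eltsMap F e)) := by
  refine (heq_of_eq ((Equiv.ofBijective _ (hF (Sh.base p.comp) X.2 Y.2)).apply_symm_apply
    ((𝔞.unit).cst (by rw [Pth.comp_map]; rfl)
      (c _ _ (p.map (sharpF F)) (eltsMap F e))))).trans ?_
  exact (𝔞.unit).cst_heq _ _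

/-- To prove an equality in `𝔟`, it suffices to prove it after applying `F`. -/
theorem fmap_inj (F : GradedFunctor k φ 𝔟 𝔞) (hF : F.Subcartesian) {V V' : 𝒱}
    {f : V ⟶ V'} {B : 𝔟.Obj V} {B' : 𝔟.Obj V'} {x y : 𝔟.Hom f B B'}
    (h : F.map f x = F.map f y) : x = y :=
  (hF f B B').injective h

@[simp] theorem sharpF_base (F : GradedFunctor k φ 𝔟 𝔞) {X Y : Sh 𝔟} (a : X ⟶ Y) :
    Sh.base ((sharpF F).map a) = φ.map (Sh.base a) := rfl

theorem cochain_congr {𝔞 : GradedCat k 𝒰} {n : ℕ} {M : Bimod k 𝔞} (c : RawCochain M n)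
    {X Y : Sh 𝔞} {p p' : Pth (Sh 𝔞) n X Y} (hp : p = p') {e : PthElts 𝔞 p}
    {e' : PthElts 𝔞 p'} (he : HEq e e') : HEq (c X Y p e) (c X Y p' e') := by
  subst hp; rw [eq_of_heq he]

/-- Congruence for evaluation of a relative cochain at a `cons`-path. -/
theorem rel_cons_congr {𝔞 : GradedCat k 𝒰} {n : ℕ} {W : 𝒰} {B : 𝔞.Obj W} {Y₀ : Sh 𝔞}
    {v : W ⟶ Y₀.1}
    (χ : ∀ (Z : Sh 𝔞) (q : Pth (Sh 𝔞) (n + 1) Y₀ Z), PthElts 𝔞 q →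
      𝔞.Hom (v ≫ Sh.base q.comp) B Z.2)
    {Y' Z : Sh 𝔞} {f f' : Y₀ ⟶ Y'} (hf : f = f') (q : Pth (Sh 𝔞) n Y' Z)
    (e : PthElts 𝔞 q) {x : 𝔞.Hom (Sh.base f) Y₀.2 Y'.2}
    {x' : 𝔞.Hom (Sh.base f') Y₀.2 Y'.2} (hx : HEq x x') :
    HEq (χ Z (.cons f q) (.cons x e)) (χ Z (.cons f' q) (.cons x' e)) := by
  subst hf; rw [eq_of_heq hx]

/-- Transfer of multilinearity along a subcartesian graded functor. -/
theorem isML_transfer (F : GradedFunctor k φ 𝔟 𝔞) (hF : F.Subcartesian) :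
    ∀ (n : ℕ) {W : 𝒱} {B : 𝔟.Obj W} {Y : Sh 𝔟} (v : W ⟶ Y.1)
      (v' : φ.obj W ⟶ φ.obj Y.1) (hv : v' = φ.map v)
      (χ : ∀ (Z : Sh 𝔟) (q : Pth (Sh 𝔟) n Y Z), PthElts 𝔟 q →
        𝔟.Hom (v ≫ Sh.base q.comp) B Z.2)
      (χ' : ∀ (Z : Sh 𝔞) (q : Pth (Sh 𝔞) n ((sharpF F).obj Y) Z), PthElts 𝔞 q →
        𝔞.Hom (v' ≫ Sh.base q.comp) (F.obj B) Z.2)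
      (_ : ∀ Z q e, HEq (F.map (v ≫ Sh.base q.comp) (χ Z q e))
        (χ' ((sharpF F).obj Z) (q.map (sharpF F)) (eltsMap F e)))
      (_ : IsML 𝔞.unit χ'), IsML 𝔟.unit χ := by
  intro n
  induction n with
  | zero => intros; exact trivial
  | succ n ih =>
    intro W B Y v v' hv χ χ' compat h
    obtain ⟨h1, h2, h3⟩ := h
    refine ⟨?_, ?_, ?_⟩
    · intro Y' Z a q e x x'
      apply fmap_inj F hF
      refine Eq.trans ?_ (F.map_add _ _ _).symm
      refine eq_of_heq (((compat Z (.cons a q) (.cons (x + x') e)).trans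
        (heq_of_eq ?_)).trans
        (GradedCat.add_congr ?_ (compat Z (.cons a q) (.cons x e)).symm
          (compat Z (.cons a q) (.cons x' e)).symm))
      · show χ' ((sharpF F).obj Z) (.cons ((sharpF F).map a) (q.map (sharpF F)))
            (.cons (F.map (Sh.base a) (x + x')) (eltsMap F e)) =
          χ' _ (.cons ((sharpF F).map a) (q.map (sharpF F)))
            (.cons (F.map (Sh.base a) x) (eltsMap F e)) +
          χ' _ (.cons ((sharpF F).map a) (q.map (sharpF F)))
            (.cons (F.map (Sh.base a) x') (eltsMap F e))
        rw [F.map_add]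
        exact h1 _ _ _ _ _ _ _
      · rw [base_comp_map F, hv]; exact (φ.map_comp _ _).symm
    · intro Y' Z a q e r x
      apply fmap_inj F hF
      refine Eq.trans ?_ (F.map_smul _ _ _).symm
      refine eq_of_heq (((compat Z (.cons a q) (.cons (r • x) e)).trans
        (heq_of_eq ?_)).trans
        (GradedCat.smul_congr ?_ r (compat Z (.cons a q) (.cons x e)).symm))
      · show χ' ((sharpF F).obj Z) (.cons ((sharpF F).map a) (q.map (sharpF F)))
            (.cons (F.map (Sh.base a) (r • x)) (eltsMap F e)) =
          r • χ' _ (.cons ((sharpF F).map a) (q.map (sharpF F)))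
            (.cons (F.map (Sh.base a) x) (eltsMap F e))
        rw [F.map_smul]
        exact h2 _ _ _ _ _ _ _
      · rw [base_comp_map F, hv]; exact (φ.map_comp _ _).symm
    · intro Y' a x
      refine ih (v ≫ Sh.base a) (v' ≫ φ.map (Sh.base a)) (by rw [hv, ← φ.map_comp])
        _ _ ?_ (h3 ((sharpF F).obj Y') ((sharpF F).map a) (F.map (Sh.base a) x))
      intro Z q e
      exact ((F.map_congr (show (v ≫ Sh.base a) ≫ Sh.base q.comp =
          v ≫ Sh.base (Pth.cons a q).comp by simp) ((𝔟.unit).cst_heq _ _)).trans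
        (compat Z (.cons a q) (.cons x e))).trans ((𝔞.unit).cst_heq _ _).symm

/-- `F` intertwines the inductive cores of the Hochschild differentials. -/
theorem hochD_compat (F : GradedFunctor k φ 𝔟 𝔞) :
    ∀ (m : ℕ) {W : 𝒱} {B : 𝔟.Obj W} {Y Z : Sh 𝔟}
      (v : W ⟶ Y.1) (v' : φ.obj W ⟶ φ.obj Y.1) (_ : v' = φ.map v)
      (χ : ∀ (Z' : Sh 𝔟) (q : Pth (Sh 𝔟) m Y Z'), PthElts 𝔟 q →
        𝔟.Hom (v ≫ Sh.base q.comp) B Z'.2)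
      (χ' : ∀ (Z' : Sh 𝔞) (q : Pth (Sh 𝔞) m ((sharpF F).obj Y) Z'), PthElts 𝔞 q →
        𝔞.Hom (v' ≫ Sh.base q.comp) (F.obj B) Z'.2)
      (G : ∀ (Y' Z' : Sh 𝔟) (c : Y ⟶ Y') (z : 𝔟.Hom (Sh.base c) Y.2 Y'.2)
        (q : Pth (Sh 𝔟) m Y' Z'), PthElts 𝔟 q →
        𝔟.Hom (v ≫ (Sh.base c ≫ Sh.base q.comp)) B Z'.2)
      (G' : ∀ (Y' Z' : Sh 𝔞) (c : (sharpF F).obj Y ⟶ Y')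
        (z : 𝔞.Hom (Sh.base c) ((sharpF F).obj Y).2 Y'.2) (q : Pth (Sh 𝔞) m Y' Z'),
        PthElts 𝔞 q → 𝔞.Hom (v' ≫ (Sh.base c ≫ Sh.base q.comp)) (F.obj B) Z'.2)
      (_ : ∀ Z' q e, HEq (F.map (v ≫ Sh.base q.comp) (χ Z' q e))
        (χ' ((sharpF F).obj Z') (q.map (sharpF F)) (eltsMap F e)))
      (_ : ∀ Y' Z' (c : Y ⟶ Y') (z : 𝔟.Hom (Sh.base c) Y.2 Y'.2) q e,
        HEq (F.map (v ≫ (Sh.base c ≫ Sh.base q.comp)) (G Y' Z' c z q e))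
          (G' ((sharpF F).obj Y') ((sharpF F).obj Z') ((sharpF F).map c)
            (F.map (Sh.base c) z) (q.map (sharpF F)) (eltsMap F e)))
      (p : Pth (Sh 𝔟) (m + 1) Y Z) (e : PthElts 𝔟 p),
      HEq (F.map (v ≫ Sh.base p.comp) (hochD 𝔟.unit B v χ G p e))
        (hochD 𝔞.unit (F.obj B) v' χ' G' (p.map (sharpF F)) (eltsMap F e)) := by
  intro m
  induction m with
  | zero =>
    intro W B Y Z v v' hv χ χ' G G' cχ cG p e
    cases p with
    | cons a q =>
      cases q with
      | nil =>
        cases e with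
        | cons x e' =>
          cases e'
          simp only [Pth.map, eltsMap, hochD]
          refine HEq.trans (heq_of_eq (F.map_sub _ _ _)) ?_
          refine GradedCat.sub_congr ?_ (cG _ _ a x (.nil _) (.nil _)) ?_
          · rw [hv]; simp; exact congrArg (φ.map v ≫ ·) (Category.comp_id _).symm
          · refine ((F.map_congr (show v ≫ Sh.base (Pth.cons a (Pth.nil Z)).comp =
                (v ≫ Sh.base (Pth.nil Y).comp) ≫ Sh.base a by simp)
                ((𝔟.unit).cst_heq _ _)).trans ?_).trans ((𝔞.unit).cst_heq _ _).symm
            refine (F.map_comp x _).trans ?_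
            exact 𝔞.comp_congr rfl (by rw [hv]; simp; exact (Category.comp_id _).symm) HEq.rfl (cχ Y (.nil Y) (.nil _))
  | succ m ihm =>
    intro W B Y Z v v' hv χ χ' G G' cχ cG p e
    cases p with
    | cons a q =>
      cases e with
      | cons x e' =>
        simp only [Pth.map, eltsMap, hochD]
        refine HEq.trans (heq_of_eq (F.map_sub _ _ _)) ?_
        refine GradedCat.sub_congr ?_ (cG _ _ a x q e') ?_
        · rw [hv]; simp [base_comp_map F]; rfl
        · refine ((F.map_congr (show v ≫ Sh.base (Pth.cons a q).comp =
              (v ≫ Sh.base a) ≫ Sh.base q.comp by simp)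
              ((𝔟.unit).cst_heq _ _)).trans ?_).trans ((𝔞.unit).cst_heq _ _).symm
          refine ihm (v ≫ Sh.base a) (v' ≫ Sh.base ((sharpF F).map a))
            (by rw [hv]; exact (φ.map_comp _ _).symm) _ _ _ _ ?_ ?_ q e'
          · intro Z' r er
            exact ((F.map_congr (show (v ≫ Sh.base a) ≫ Sh.base r.comp =
                v ≫ Sh.base (Pth.cons a r).comp by simp) ((𝔟.unit).cst_heq _ _)).trans
              (cχ Z' (.cons a r) (.cons x er))).trans ((𝔞.unit).cst_heq _ _).symm
          · intro Y'' Z' c z r er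
            refine ((F.map_congr (show (v ≫ Sh.base a) ≫ Sh.base c ≫ Sh.base r.comp =
                v ≫ Sh.base (Pth.cons (a ≫ c) r).comp by simp)
                ((𝔟.unit).cst_heq _ _)).trans ?_).trans ((𝔞.unit).cst_heq _ _).symm
            refine (cχ Z' (.cons (a ≫ c) r) (.cons (𝔟.comp z x) er)).trans ?_
            exact rel_cons_congr χ' ((sharpF F).map_comp a c) (r.map (sharpF F))
              (eltsMap F er) (F.map_comp z x)


theorem pthElts_cons_congr {𝔞 : GradedCat k 𝒰} {n : ℕ} {X Y Z : Sh 𝔞} {f f' : X ⟶ Y}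
    (hf : f = f') {p p' : Pth (Sh 𝔞) n Y Z} (hp : p = p')
    {x : 𝔞.Hom (Sh.base f) X.2 Y.2} {x' : 𝔞.Hom (Sh.base f') X.2 Y.2} (hx : HEq x x')
    {e : PthElts 𝔞 p} {e' : PthElts 𝔞 p'} (he : HEq e e') :
    HEq (PthElts.cons (f := f) (p := p) x e) (PthElts.cons (f := f') (p := p') x' e') := by
  subst hf; subst hp; rw [eq_of_heq hx, eq_of_heq he]

theorem pth_map_gid (𝔞 : GradedCat k 𝒰) {n : ℕ} {X Y : Sh 𝔞} (p : Pth (Sh 𝔞) n X Y) :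
    p.map (sharpF (GradedFunctor.gid 𝔞)) = p := by
  induction p with
  | nil => rfl
  | cons f p ih =>
    show Pth.cons f (p.map (sharpF (GradedFunctor.gid 𝔞))) = Pth.cons f p
    rw [ih]; rfl

theorem eltsMap_gid (𝔞 : GradedCat k 𝒰) {n : ℕ} {X Y : Sh 𝔞} {p : Pth (Sh 𝔞) n X Y}
    (e : PthElts 𝔞 p) : HEq (eltsMap (GradedFunctor.gid 𝔞) e) e := by
  induction e with
  | nil => exact HEq.rfl
  | cons x e ih => exact pthElts_cons_congr rfl (pth_map_gid _ _) HEq.rfl ih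

theorem pth_map_comp' {𝒲 : Type u} [Category.{u} 𝒲] {ψ : 𝒲 ⥤ 𝒱} {𝔠 : GradedCat k 𝒲}
    (F : GradedFunctor k φ 𝔟 𝔞) (G : GradedFunctor k ψ 𝔠 𝔟) {n : ℕ} {X Y : Sh 𝔠}
    (p : Pth (Sh 𝔠) n X Y) :
    p.map (sharpF (F.comp G)) = (p.map (sharpF G)).map (sharpF F) := by
  induction p with
  | nil => rfl
  | cons f p ih =>
    show Pth.cons ((sharpF F).map ((sharpF G).map f)) (p.map (sharpF (F.comp G))) =
      Pth.cons ((sharpF F).map ((sharpF G).map f)) ((p.map (sharpF G)).map (sharpF F))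
    rw [ih]; rfl

theorem eltsMap_comp {𝒲 : Type u} [Category.{u} 𝒲] {ψ : 𝒲 ⥤ 𝒱} {𝔠 : GradedCat k 𝒲}
    (F : GradedFunctor k φ 𝔟 𝔞) (G : GradedFunctor k ψ 𝔠 𝔟) {n : ℕ} {X Y : Sh 𝔠}
    {p : Pth (Sh 𝔠) n X Y} (e : PthElts 𝔠 p) :
    HEq (eltsMap (F.comp G) e) (eltsMap F (eltsMap G e)) := by
  induction e with
  | nil => exact HEq.rfl
  | cons x e ih => exact pthElts_cons_congr rfl (pth_map_comp' F G _) HEq.rfl ih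


end Aux

/-- Let `(φ, F) : (𝒱, 𝔟) → (𝒰, 𝔞)` be a subcartesian graded functor.  Then `F` defines
an isomorphism of `𝔟`-bimodules `1_𝔟 ≅ F*(1_𝔞)`, and the maps
`(F*)ⁿ(ψ) = (F⁻¹ ∘ ψ_{(φ v, F B)} ∘ F^{⊗n})` define a morphism of complexes
`F* : C_𝒰(𝔞) → C_𝒱(𝔟)` (they preserve multilinear cochains, are `k`-linear and commute
with the Hochschild differentials).  Moreover this assignment is functorial: it sends
the identity to the identity and composites of subcartesian graded functors to
composites in the reverse order, so taking Hochschild complexes is a contravariant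
functor on the category `Map_sc` of map-graded categories and subcartesian graded
functors. -/
theorem statement12 {𝒱 : Type u} [Category.{u} 𝒱] {φ : 𝒱 ⥤ 𝒰} {𝔟 : GradedCat k 𝒱}
    {𝔞 : GradedCat k 𝒰} (F : GradedFunctor k φ 𝔟 𝔞) (hF : F.Subcartesian) (n : ℕ) :
    -- `F.map` is an isomorphism of bimodules `1_𝔟 ≅ F*(1_𝔞)`:
    ((∀ {V V' : 𝒱} (f : V ⟶ V') (B : 𝔟.Obj V) (B' : 𝔟.Obj V'),
        Function.Bijective (fun x : 𝔟.Hom f B B' => F.map f x)) ∧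
      (∀ {V V' V'' : 𝒱} {f : V' ⟶ V''} {g : V ⟶ V'} {C : 𝔟.Obj V} {B : 𝔟.Obj V'}
        {A : 𝔟.Obj V''} (x : 𝔟.Hom f B A) (y : 𝔟.Hom g C B),
        F.map (g ≫ f) ((𝔟.unit).actL x y) =
          (Bimod.pullback F 𝔞.unit).actL x (F.map g y)) ∧
      (∀ {V V' V'' : 𝒱} {f : V' ⟶ V''} {g : V ⟶ V'} {C : 𝔟.Obj V} {B : 𝔟.Obj V'}
        {A : 𝔟.Obj V''} (x : 𝔟.Hom f B A) (y : 𝔟.Hom g C B),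
        F.map (g ≫ f) ((𝔟.unit).actR x y) =
          (Bimod.pullback F 𝔞.unit).actR (F.map f x) y)) ∧
    -- `F*` is a morphism of complexes `C_𝒰(𝔞) → C_𝒱(𝔟)`:
    (∀ c : RawCochain 𝔞.unit n, IsCochain 𝔞.unit c →
      IsCochain 𝔟.unit (FstarUnit F hF c)) ∧
    (∀ c c' : RawCochain 𝔞.unit n,
      FstarUnit F hF (c + c') = FstarUnit F hF c + FstarUnit F hF c') ∧
    (∀ (r : k) (c : RawCochain 𝔞.unit n),
      FstarUnit F hF (r • c) = r • FstarUnit F hF c) ∧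
    (∀ c : RawCochain 𝔞.unit n,
      FstarUnit F hF (dRaw 𝔞.unit c) = dRaw 𝔟.unit (FstarUnit F hF c)) ∧
    -- functoriality: identities and composites are preserved:
    (∀ c : RawCochain 𝔞.unit n,
      FstarUnit (GradedFunctor.gid 𝔞) (GradedFunctor.gid_subcartesian 𝔞) c = c) ∧
    (∀ (𝒲 : Type u) [Category.{u} 𝒲] (𝔠 : GradedCat k 𝒲) (ψ : 𝒲 ⥤ 𝒱)
      (G : GradedFunctor k ψ 𝔠 𝔟) (hG : G.Subcartesian)
      (hFG : (F.comp G).Subcartesian) (c : RawCochain 𝔞.unit n),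
      FstarUnit (F.comp G) hFG c = FstarUnit G hG (FstarUnit F hF c)) := by
  refine ⟨⟨fun f B B' => hF f B B', ?_, ?_⟩, ?_, ?_, ?_, ?_, ?_, ?_⟩
  · -- compatibility with left actions
    intro V V' V'' f g C B A x y
    exact eq_of_heq ((F.map_comp x y).trans ((𝔞.unit).cst_heq (φ.map_comp g f).symm
      (𝔞.comp (F.map f x) (F.map g y))).symm)
  · -- compatibility with right actions
    intro V V' V'' f g C B A x y
    exact eq_of_heq ((F.map_comp x y).trans ((𝔞.unit).cst_heq (φ.map_comp g f).symm
      (𝔞.comp (F.map f x) (F.map g y))).symm)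
  · -- `F*` preserves multilinear cochains
    intro c hc X
    refine isML_transfer F hF n (𝟙 X.1) (𝟙 (φ.obj X.1)) (φ.map_id _).symm _ _ ?_
      (hc ((sharpF F).obj X))
    intro Z q e
    exact ((F.map_congr (Category.id_comp _) ((𝔟.unit).cst_heq _ _)).trans
      (FstarUnit_spec F hF c X Z q e)).trans ((𝔞.unit).cst_heq _ _).symm
  · -- additivity of `F*`
    intro c c'
    funext X Y p e
    apply fmap_inj F hF
    refine eq_of_heq (((FstarUnit_spec F hF (c + c') X Y p e).trans
      (HEq.trans (b := c ((sharpF F).obj X) ((sharpF F).obj Y) (p.map (sharpF F))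
          (eltsMap F e) + c' ((sharpF F).obj X) ((sharpF F).obj Y) (p.map (sharpF F))
          (eltsMap F e)) (heq_of_eq rfl) ?_)))
    refine (GradedCat.add_congr (base_comp_map F p)
      (FstarUnit_spec F hF c X Y p e).symm
      (FstarUnit_spec F hF c' X Y p e).symm).trans (heq_of_eq ?_)
    exact (F.map_add _ _ _).symm
  · -- homogeneity of `F*`
    intro r c
    funext X Y p e
    apply fmap_inj F hF
    refine eq_of_heq (((FstarUnit_spec F hF (r • c) X Y p e).trans
      (HEq.trans (b := r • c ((sharpF F).obj X) ((sharpF F).obj Y) (p.map (sharpF F))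
          (eltsMap F e)) (heq_of_eq rfl) ?_)))
    refine (GradedCat.smul_congr (base_comp_map F p) r
      (FstarUnit_spec F hF c X Y p e).symm).trans (heq_of_eq ?_)
    exact (F.map_smul _ _ _).symm
  · -- compatibility with the Hochschild differentials
    intro c
    funext X Z p e
    apply fmap_inj F hF
    refine eq_of_heq ((FstarUnit_spec F hF (dRaw 𝔞.unit c) X Z p e).trans ?_)
    have H := hochD_compat F n (𝟙 X.1) (𝟙 (φ.obj X.1)) (φ.map_id _).symm
      (fun Z' q eq => (𝔟.unit).cst (Category.id_comp _).symm (FstarUnit F hF c X Z' q eq))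
      (fun Z' q eq => (𝔞.unit).cst (Category.id_comp _).symm
        (c ((sharpF F).obj X) Z' q eq))
      (fun Y' Z' a z q eq => (𝔟.unit).cst (Category.id_comp _).symm
        ((𝔟.unit).actR (FstarUnit F hF c Y' Z' q eq) z))
      (fun Y' Z' a z q eq => (𝔞.unit).cst (Category.id_comp _).symm
        ((𝔞.unit).actR (c Y' Z' q eq) z))
      ?_ ?_ p e
    · exact (((𝔞.unit).cst_heq _ _).trans H.symm).trans
        (F.map_congr (Category.id_comp _) ((𝔟.unit).cst_heq _ _).symm)
    · intro Z' q eq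
      exact ((F.map_congr (Category.id_comp _) ((𝔟.unit).cst_heq _ _)).trans
        (FstarUnit_spec F hF c X Z' q eq)).trans ((𝔞.unit).cst_heq _ _).symm
    · intro Y' Z' a z q eq
      refine ((F.map_congr (Category.id_comp _) ((𝔟.unit).cst_heq _ _)).trans ?_).trans
        ((𝔞.unit).cst_heq _ _).symm
      refine (F.map_comp (FstarUnit F hF c Y' Z' q eq) z).trans ?_
      exact 𝔞.comp_congr (base_comp_map F q).symm rfl
        (FstarUnit_spec F hF c Y' Z' q eq) HEq.rfl
  · -- functoriality: identity
    intro c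
    funext X Y p e
    exact eq_of_heq ((FstarUnit_spec (GradedFunctor.gid 𝔞)
      (GradedFunctor.gid_subcartesian 𝔞) c X Y p e).trans
      (cochain_congr c (pth_map_gid 𝔞 p) (eltsMap_gid 𝔞 e)))
  · -- functoriality: composition
    intro 𝒲 _ 𝔠 ψ G hG hFG c
    funext X Y p e
    apply fmap_inj (F.comp G) hFG
    refine eq_of_heq ((FstarUnit_spec (F.comp G) hFG c X Y p e).trans ?_)
    exact ((cochain_congr c (pth_map_comp' F G p) (eltsMap_comp F G e)).trans
      (FstarUnit_spec F hF c ((sharpF G).obj X) ((sharpF G).obj Y)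
        (p.map (sharpF G)) (eltsMap G e)).symm).trans
      (F.map_congr (base_comp_map G p)
        (FstarUnit_spec G hG (FstarUnit F hF c) X Y p e).symm)


end MapGr
end

section
/- Let 𝔞 be a 𝒰-graded category and let φ_1 : 𝒱_1 ⊆ 𝒰 and φ_2 : 𝒱_2 ⊆ 𝒰 be subcategories which together constitute an ∞-cover of 𝒰 (for every natural number k, every k-simplex of 𝒩(𝒰) lies in the image of 𝒩_k(𝒱_1) or of 𝒩_k(𝒱_2)). Let 𝒱_1 ∩ 𝒱_2 be the intersection category (objects Ob(𝒱_1) ∩ Ob(𝒱_2), morphisms 𝒱_1(V,V') ∩ 𝒱_2(V,V')), with inclusions φ : 𝒱_1 ∩ 𝒱_2 ⊆ 𝒰 and α_i : 𝒱_1 ∩ 𝒱_2 ⊆ 𝒱_i. Then the Mayer–Vietoris sequence of complexes 0 → C_𝒰(𝔞) → C_{𝒱_1}(𝔞^{φ_1}) ⊕ C_{𝒱_2}(𝔞^{φ_2}) → C_{𝒱_1 ∩ 𝒱_2}(𝔞^{φ}) → 0, with first map (φ_1^*, φ_2^*) and second map (−α_1^*, α_2^*), is exact. -/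
open CategoryTheory

universe u

namespace MapGr

variable {k : Type u} [CommRing k]
variable {𝒰 : Type u} [Category.{u} 𝒰]

/-- A subcategory of `𝒰`: a class of objects and a class of morphisms, closed under
identities and composition. -/
structure Subcat (𝒰 : Type u) [Category.{u} 𝒰] where
  objs : 𝒰 → Prop
  homs : ∀ {X Y : 𝒰}, (X ⟶ Y) → Prop
  dom_mem : ∀ {X Y : 𝒰} (f : X ⟶ Y), homs f → objs X
  cod_mem : ∀ {X Y : 𝒰} (f : X ⟶ Y), homs f → objs Y
  id_mem : ∀ X : 𝒰, objs X → homs (𝟙 X)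
  comp_mem : ∀ {X Y Z : 𝒰} (f : X ⟶ Y) (g : Y ⟶ Z), homs f → homs g → homs (f ≫ g)

/-- The category carried by a subcategory. -/
def Subcat.Cat (𝒮 : Subcat 𝒰) : Type u := { X : 𝒰 // 𝒮.objs X }

instance (𝒮 : Subcat 𝒰) : Category.{u} 𝒮.Cat where
  Hom A B := { f : A.1 ⟶ B.1 // 𝒮.homs f }
  id A := ⟨𝟙 A.1, 𝒮.id_mem A.1 A.2⟩
  comp f g := ⟨f.1 ≫ g.1, 𝒮.comp_mem _ _ f.2 g.2⟩
  id_comp f := by apply Subtype.ext; simp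
  comp_id f := by apply Subtype.ext; simp
  assoc f g h := by apply Subtype.ext; simp

/-- The inclusion functor of a subcategory. -/
def Subcat.incl (𝒮 : Subcat 𝒰) : 𝒮.Cat ⥤ 𝒰 where
  obj A := A.1
  map f := f.1
  map_id _ := rfl
  map_comp _ _ := rfl

/-- The intersection `𝒱₁ ∩ 𝒱₂` of two subcategories. -/
def Subcat.inter (𝒮 𝒯 : Subcat 𝒰) : Subcat 𝒰 where
  objs X := 𝒮.objs X ∧ 𝒯.objs X
  homs f := 𝒮.homs f ∧ 𝒯.homs f
  dom_mem f h := ⟨𝒮.dom_mem f h.1, 𝒯.dom_mem f h.2⟩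
  cod_mem f h := ⟨𝒮.cod_mem f h.1, 𝒯.cod_mem f h.2⟩
  id_mem X h := ⟨𝒮.id_mem X h.1, 𝒯.id_mem X h.2⟩
  comp_mem f g h h' := ⟨𝒮.comp_mem f g h.1 h'.1, 𝒯.comp_mem f g h.2 h'.2⟩

/-- The inclusion `𝒱₁ ∩ 𝒱₂ ⊆ 𝒱₁`. -/
def Subcat.interFst (𝒮 𝒯 : Subcat 𝒰) : (𝒮.inter 𝒯).Cat ⥤ 𝒮.Cat where
  obj A := ⟨A.1, A.2.1⟩
  map f := ⟨f.1, f.2.1⟩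
  map_id _ := rfl
  map_comp _ _ := rfl

/-- The inclusion `𝒱₁ ∩ 𝒱₂ ⊆ 𝒱₂`. -/
def Subcat.interSnd (𝒮 𝒯 : Subcat 𝒰) : (𝒮.inter 𝒯).Cat ⥤ 𝒯.Cat where
  obj A := ⟨A.1, A.2.2⟩
  map f := ⟨f.1, f.2.2⟩
  map_id _ := rfl
  map_comp _ _ := rfl

/-- The canonical (cartesian) graded functor
`(𝒱₁ ∩ 𝒱₂, 𝔞^φ) → (𝒱₁, 𝔞^{φ₁})` over the inclusion `𝒱₁ ∩ 𝒱₂ ⊆ 𝒱₁`. -/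
def interRes₁ (𝒮 𝒯 : Subcat 𝒰) (𝔞 : GradedCat k 𝒰) :
    GradedFunctor k (Subcat.interFst 𝒮 𝒯) (𝔞.restrict (𝒮.inter 𝒯).incl)
      (𝔞.restrict 𝒮.incl) where
  obj {V} B := B
  map := fun {V V'} _f {B B'} x => x
  map_add := by intros; rfl
  map_smul := by intros; rfl
  map_id := by
    intro V B
    exact (𝔞.Hcast_heq ((𝒮.inter 𝒯).incl.map_id V).symm (𝔞.id B)).trans
      (𝔞.Hcast_heq (𝒮.incl.map_id ((Subcat.interFst 𝒮 𝒯).obj V)).symm (𝔞.id B)).symm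
  map_comp := by
    intro V V' V'' f g C B A x y
    exact (𝔞.Hcast_heq ((𝒮.inter 𝒯).incl.map_comp g f).symm (𝔞.comp x y)).trans
      (𝔞.Hcast_heq (𝒮.incl.map_comp ((Subcat.interFst 𝒮 𝒯).map g)
        ((Subcat.interFst 𝒮 𝒯).map f)).symm (𝔞.comp x y)).symm

/-- The canonical (cartesian) graded functor
`(𝒱₁ ∩ 𝒱₂, 𝔞^φ) → (𝒱₂, 𝔞^{φ₂})` over the inclusion `𝒱₁ ∩ 𝒱₂ ⊆ 𝒱₂`. -/
def interRes₂ (𝒮 𝒯 : Subcat 𝒰) (𝔞 : GradedCat k 𝒰) :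
    GradedFunctor k (Subcat.interSnd 𝒮 𝒯) (𝔞.restrict (𝒮.inter 𝒯).incl)
      (𝔞.restrict 𝒯.incl) where
  obj {V} B := B
  map := fun {V V'} _f {B B'} x => x
  map_add := by intros; rfl
  map_smul := by intros; rfl
  map_id := by
    intro V B
    exact (𝔞.Hcast_heq ((𝒮.inter 𝒯).incl.map_id V).symm (𝔞.id B)).trans
      (𝔞.Hcast_heq (𝒯.incl.map_id ((Subcat.interSnd 𝒮 𝒯).obj V)).symm (𝔞.id B)).symm
  map_comp := by
    intro V V' V'' f g C B A x y
    exact (𝔞.Hcast_heq ((𝒮.inter 𝒯).incl.map_comp g f).symm (𝔞.comp x y)).trans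
      (𝔞.Hcast_heq (𝒯.incl.map_comp ((Subcat.interSnd 𝒮 𝒯).map g)
        ((Subcat.interSnd 𝒮 𝒯).map f)).symm (𝔞.comp x y)).symm

theorem interRes₁_subcartesian (𝒮 𝒯 : Subcat 𝒰) (𝔞 : GradedCat k 𝒰) :
    (interRes₁ 𝒮 𝒯 𝔞).Subcartesian := by
  intro V V' f B B'
  exact ⟨fun a b h => h, fun y => ⟨y, rfl⟩⟩

theorem interRes₂_subcartesian (𝒮 𝒯 : Subcat 𝒰) (𝔞 : GradedCat k 𝒰) :
    (interRes₂ 𝒮 𝒯 𝔞).Subcartesian := by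
  intro V V' f B B'
  exact ⟨fun a b h => h, fun y => ⟨y, rfl⟩⟩

end MapGr

namespace MapGr
section MVAux

variable {k : Type u} [CommRing k]
variable {𝒰 : Type u} [Category.{u} 𝒰]

/-- The base functor from `𝒰^♯` to `𝒰`. -/
def bF (𝔞 : GradedCat k 𝒰) : Sh 𝔞 ⥤ 𝒰 where
  obj X := X.1
  map f := Sh.base f
  map_id _ := rfl
  map_comp _ _ := rfl

/-- A path of `𝒰` lies entirely in a subcategory. -/
def pIn (𝒮 : Subcat 𝒰) : ∀ {n : ℕ} {X Y : 𝒰}, Pth 𝒰 n X Y → Prop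
  | _, _, _, .nil X => 𝒮.objs X
  | _, _, _, .cons f p => 𝒮.homs f ∧ pIn 𝒮 p

theorem pIn_src (𝒮 : Subcat 𝒰) : ∀ {n : ℕ} {X Y : 𝒰} (p : Pth 𝒰 n X Y),
    pIn 𝒮 p → 𝒮.objs X
  | _, _, _, .nil _, h => h
  | _, _, _, .cons f _, h => 𝒮.dom_mem f h.1

theorem pIn_tgt (𝒮 : Subcat 𝒰) : ∀ {n : ℕ} {X Y : 𝒰} (p : Pth 𝒰 n X Y),
    pIn 𝒮 p → 𝒮.objs Y
  | _, _, _, .nil _, h => h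
  | _, _, _, .cons _ p, h => pIn_tgt 𝒮 p h.2

theorem pIn_map_incl (𝒮 : Subcat 𝒰) : ∀ {n : ℕ} {A B : 𝒮.Cat} (p : Pth 𝒮.Cat n A B),
    pIn 𝒮 (p.map 𝒮.incl)
  | _, _, _, .nil A => A.2
  | _, _, _, .cons f p => ⟨f.2, pIn_map_incl 𝒮 p⟩

theorem pIn_heq (𝒮 : Subcat 𝒰) {n : ℕ} {X Y X' Y' : 𝒰} (hX : X = X') (hY : Y = Y')
    {p : Pth 𝒰 n X Y} {p' : Pth 𝒰 n X' Y'} (hp : HEq p p') : pIn 𝒮 p ↔ pIn 𝒮 p' := by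
  subst hX; subst hY; rw [eq_of_heq hp]

theorem pIn_inter_iff (𝒮 𝒯 : Subcat 𝒰) : ∀ {n : ℕ} {X Y : 𝒰} (p : Pth 𝒰 n X Y),
    pIn (𝒮.inter 𝒯) p ↔ pIn 𝒮 p ∧ pIn 𝒯 p
  | _, _, _, .nil _ => Iff.rfl
  | _, _, _, .cons f p => by
      rw [show pIn (𝒮.inter 𝒯) (.cons f p) ↔
          ((𝒮.homs f ∧ 𝒯.homs f) ∧ pIn (𝒮.inter 𝒯) p) from Iff.rfl,
        pIn_inter_iff 𝒮 𝒯 p,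
        show pIn 𝒮 (.cons f p) ↔ (𝒮.homs f ∧ pIn 𝒮 p) from Iff.rfl,
        show pIn 𝒯 (.cons f p) ↔ (𝒯.homs f ∧ pIn 𝒯 p) from Iff.rfl]
      tauto

end MVAux
section MVAux2

variable {k : Type u} [CommRing k]
variable {𝒰 : Type u} [Category.{u} 𝒰]

theorem pIn_of_lift (𝒮 : Subcat 𝒰) {m : ℕ} {A B : 𝒰} (p : Pth 𝒰 m A B)
    (t : NerveTot 𝒮.Cat m) (ht : NerveTot.map 𝒮.incl t = ⟨A, B, p⟩) : pIn 𝒮 p := by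
  obtain ⟨t1, t2, tp⟩ := t
  have h1 : 𝒮.incl.obj t1 = A := congrArg (fun s : NerveTot 𝒰 m => s.1) ht
  have h2 : 𝒮.incl.obj t2 = B := congrArg (fun s : NerveTot 𝒰 m => s.2.1) ht
  have h3 : HEq (tp.map 𝒮.incl) p := congr_arg_heq (fun s : NerveTot 𝒰 m => s.2.2) ht
  exact (pIn_heq 𝒮 h1 h2 h3).mp (pIn_map_incl 𝒮 tp)

theorem cover_path {𝔞 : GradedCat k 𝒰} {𝒮 𝒯 : Subcat 𝒰}
    (hcov : ∀ (m : ℕ) (s : NerveTot 𝒰 m),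
      (∃ t : NerveTot 𝒮.Cat m, NerveTot.map 𝒮.incl t = s) ∨
      (∃ t : NerveTot 𝒯.Cat m, NerveTot.map 𝒯.incl t = s))
    {m : ℕ} {X Y : Sh 𝔞} (q : Pth (Sh 𝔞) m X Y) :
    pIn 𝒮 (q.map (bF 𝔞)) ∨ pIn 𝒯 (q.map (bF 𝔞)) := by
  rcases hcov m ⟨X.1, Y.1, q.map (bF 𝔞)⟩ with ⟨t, ht⟩ | ⟨t, ht⟩
  · exact Or.inl (pIn_of_lift 𝒮 _ t ht)
  · exact Or.inr (pIn_of_lift 𝒯 _ t ht)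

variable {𝒮 : Subcat 𝒰} {𝔞 : GradedCat k 𝒰}

/-- Lift of an object of `𝒰^♯` along the inclusion of a subcategory. -/
def liftO (𝒮 : Subcat 𝒰) (𝔞 : GradedCat k 𝒰) (X : Sh 𝔞) (hX : 𝒮.objs X.1) :
    Sh (𝔞.restrict 𝒮.incl) :=
  ⟨⟨X.1, hX⟩, X.2⟩

/-- Lift of a path of `𝒩(𝔞)` lying in a subcategory. -/
def liftPth (𝒮 : Subcat 𝒰) (𝔞 : GradedCat k 𝒰) :
    ∀ {n : ℕ} {X Y : Sh 𝔞} (q : Pth (Sh 𝔞) n X Y), pIn 𝒮 (q.map (bF 𝔞)) →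
      ∀ (hX : 𝒮.objs X.1) (hY : 𝒮.objs Y.1),
      Pth (Sh (𝔞.restrict 𝒮.incl)) n (liftO 𝒮 𝔞 X hX) (liftO 𝒮 𝔞 Y hY)
  | _, _, _, .nil X, _, hX, hY => .nil _
  | _, _, _, .cons f q, h, hX, hY =>
      .cons (show liftO 𝒮 𝔞 _ hX ⟶ liftO 𝒮 𝔞 _ (𝒮.cod_mem (Sh.base f) h.1) from
        ⟨Sh.base f, h.1⟩) (liftPth 𝒮 𝔞 q h.2 _ hY)

/-- Lift of a family of elements over a lifted path. -/
def liftElts (𝒮 : Subcat 𝒰) (𝔞 : GradedCat k 𝒰) :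
    ∀ {n : ℕ} {X Y : Sh 𝔞} {q : Pth (Sh 𝔞) n X Y} (e : PthElts 𝔞 q)
      (h : pIn 𝒮 (q.map (bF 𝔞))) (hX : 𝒮.objs X.1) (hY : 𝒮.objs Y.1),
      PthElts (𝔞.restrict 𝒮.incl) (liftPth 𝒮 𝔞 q h hX hY)
  | _, _, _, _, .nil X, _, _, _ => .nil _
  | _, _, _, _, .cons x e, h, hX, hY => .cons x (liftElts 𝒮 𝔞 e h.2 _ hY)

end MVAux2
section MVAux3

variable {k : Type u} [CommRing k]
variable {𝒰 : Type u} [Category.{u} 𝒰]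
variable {𝒞 : Type u} [Category.{u} 𝒞]

theorem pthElts_cons_heq {𝔟 : GradedCat k 𝒞} {n : ℕ} {X Y Y' Z : Sh 𝔟}
    {f : X ⟶ Y} {p : Pth (Sh 𝔟) n Y Z} {f' : X ⟶ Y'} {p' : Pth (Sh 𝔟) n Y' Z}
    (hY : Y = Y') (hf : HEq f f') (hp : HEq p p')
    {x : 𝔟.Hom (Sh.base f) X.2 Y.2} {x' : 𝔟.Hom (Sh.base f') X.2 Y'.2} (hx : HEq x x')
    {e : PthElts 𝔟 p} {e' : PthElts 𝔟 p'} (he : HEq e e') :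
    HEq (PthElts.cons x e) (PthElts.cons x' e') := by
  subst hY
  have hf' := eq_of_heq hf; subst hf'
  have hp' := eq_of_heq hp; subst hp'
  have hx' := eq_of_heq hx; subst hx'
  rw [eq_of_heq he]

theorem raw_congr {𝔟 : GradedCat k 𝒞} {M : Bimod k 𝔟} {n : ℕ} (c : RawCochain M n)
    {X Y : Sh 𝔟} {p p' : Pth (Sh 𝔟) n X Y} (hp : p = p')
    {e : PthElts 𝔟 p} {e' : PthElts 𝔟 p'} (he : HEq e e') :
    HEq (c X Y p e) (c X Y p' e') := by
  subst hp; rw [eq_of_heq he]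

variable {𝒮 : Subcat 𝒰} {𝔞 : GradedCat k 𝒰}

theorem pIn_map_sharp (𝒮 : Subcat 𝒰) (𝔞 : GradedCat k 𝒰) :
    ∀ {n : ℕ} {X Y : Sh (𝔞.restrict 𝒮.incl)} (p : Pth (Sh (𝔞.restrict 𝒮.incl)) n X Y),
      pIn 𝒮 ((p.map (sharpF (restrictProj 𝒮.incl 𝔞))).map (bF 𝔞))
  | _, _, _, .nil X => X.1.2
  | _, _, _, .cons g p => ⟨(Sh.base g).2, pIn_map_sharp 𝒮 𝔞 p⟩

theorem map_liftPth : ∀ {n : ℕ} {X Y : Sh 𝔞} (q : Pth (Sh 𝔞) n X Y)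
    (h : pIn 𝒮 (q.map (bF 𝔞))) (hX : 𝒮.objs X.1) (hY : 𝒮.objs Y.1),
    Pth.map (sharpF (restrictProj 𝒮.incl 𝔞)) (liftPth 𝒮 𝔞 q h hX hY) = q
  | _, _, _, .nil X, _, _, _ => rfl
  | _, _, _, .cons f q, h, hX, hY => congrArg (Pth.cons f) (map_liftPth q h.2 _ hY)

theorem heq_eltsMap_liftElts : ∀ {n : ℕ} {X Y : Sh 𝔞} {q : Pth (Sh 𝔞) n X Y}
    (e : PthElts 𝔞 q) (h : pIn 𝒮 (q.map (bF 𝔞))) (hX : 𝒮.objs X.1) (hY : 𝒮.objs Y.1),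
    HEq (eltsMap (restrictProj 𝒮.incl 𝔞) (liftElts 𝒮 𝔞 e h hX hY)) e
  | _, _, _, _, .nil X, _, _, _ => HEq.rfl
  | _, _, _, _, .cons x e, h, hX, hY =>
      pthElts_cons_heq rfl HEq.rfl (heq_of_eq (map_liftPth _ h.2 _ hY)) HEq.rfl
        (heq_eltsMap_liftElts e h.2 _ hY)

theorem liftPth_map_sharp : ∀ {n : ℕ} {X Y : Sh (𝔞.restrict 𝒮.incl)}
    (p : Pth (Sh (𝔞.restrict 𝒮.incl)) n X Y)
    (h : pIn 𝒮 ((p.map (sharpF (restrictProj 𝒮.incl 𝔞))).map (bF 𝔞)))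
    (hX : 𝒮.objs X.1.1) (hY : 𝒮.objs Y.1.1),
    liftPth 𝒮 𝔞 (p.map (sharpF (restrictProj 𝒮.incl 𝔞))) h hX hY = p
  | _, _, _, .nil X, _, _, _ => rfl
  | _, _, _, .cons g p, h, hX, hY => congrArg (Pth.cons g) (liftPth_map_sharp p h.2 _ hY)

theorem heq_liftElts_eltsMap : ∀ {n : ℕ} {X Y : Sh (𝔞.restrict 𝒮.incl)}
    {p : Pth (Sh (𝔞.restrict 𝒮.incl)) n X Y} (e : PthElts (𝔞.restrict 𝒮.incl) p)
    (h : pIn 𝒮 ((p.map (sharpF (restrictProj 𝒮.incl 𝔞))).map (bF 𝔞)))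
    (hX : 𝒮.objs X.1.1) (hY : 𝒮.objs Y.1.1),
    HEq (liftElts 𝒮 𝔞 (eltsMap (restrictProj 𝒮.incl 𝔞) e) h hX hY) e
  | _, _, _, _, .nil X, _, _, _ => HEq.rfl
  | _, _, _, _, .cons x e, h, hX, hY =>
      pthElts_cons_heq rfl HEq.rfl (heq_of_eq (liftPth_map_sharp _ h.2 _ hY)) HEq.rfl
        (heq_liftElts_eltsMap e h.2 _ hY)

theorem liftPth_comp {n : ℕ} {X Y : Sh 𝔞} (q : Pth (Sh 𝔞) n X Y)
    (h : pIn 𝒮 (q.map (bF 𝔞))) (hX : 𝒮.objs X.1) (hY : 𝒮.objs Y.1) :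
    𝒮.incl.map (Sh.base ((liftPth 𝒮 𝔞 q h hX hY).comp)) = Sh.base q.comp := by
  have h1 := congrArg Pth.comp (map_liftPth (𝒮 := 𝒮) q h hX hY)
  rw [Pth.comp_map] at h1
  exact h1

end MVAux3
section MVAux4

variable {k : Type u} [CommRing k]
variable {𝒞 𝒟 : Type u} [Category.{u} 𝒞] [Category.{u} 𝒟]

theorem bimod_cst_zero {𝔟 : GradedCat k 𝒞} {M : Bimod k 𝔟} {X Y : 𝒞} {f g : X ⟶ Y}
    (h : f = g) {B : 𝔟.Obj X} {A : 𝔟.Obj Y} : M.cst h (0 : M.M f B A) = 0 := by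
  subst h; rfl

theorem bimod_cst_neg {𝔟 : GradedCat k 𝒞} {M : Bimod k 𝔟} {X Y : 𝒞} {f g : X ⟶ Y}
    (h : f = g) {B : 𝔟.Obj X} {A : 𝔟.Obj Y} (m : M.M f B A) :
    M.cst h (-m) = -(M.cst h m) := by
  subst h; rfl

theorem hcast_neg {𝔟 : GradedCat k 𝒞} {X Y : 𝒞} {f g : X ⟶ Y} (h : f = g)
    {B : 𝔟.Obj X} {A : 𝔟.Obj Y} (m : 𝔟.Hom f B A) :
    𝔟.Hcast h (-m) = -(𝔟.Hcast h m) := by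
  subst h; rfl

theorem heq_neg {𝔟 : GradedCat k 𝒞} {X Y : 𝒞} {f g : X ⟶ Y} (h : f = g)
    {B : 𝔟.Obj X} {A : 𝔟.Obj Y} {x : 𝔟.Hom f B A} {y : 𝔟.Hom g B A} (hxy : HEq x y) :
    HEq (-x) (-y) := by
  subst h; rw [eq_of_heq hxy]

theorem sharp_base_comp {φ : 𝒞 ⥤ 𝒟} {𝔟 : GradedCat k 𝒞} {𝔞 : GradedCat k 𝒟}
    (F : GradedFunctor k φ 𝔟 𝔞) {n : ℕ} {X Y : Sh 𝔟} (p : Pth (Sh 𝔟) n X Y) :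
    Sh.base ((p.map (sharpF F)).comp) = φ.map (Sh.base p.comp) := by
  rw [Pth.comp_map]; rfl

theorem fstarUnit_eval {φ : 𝒞 ⥤ 𝒟} {𝔟 : GradedCat k 𝒞} {𝔞 : GradedCat k 𝒟}
    (F : GradedFunctor k φ 𝔟 𝔞) (hF : F.Subcartesian)
    (hid : ∀ {V V' : 𝒞} (f : V ⟶ V') {B : 𝔟.Obj V} {B' : 𝔟.Obj V'} (x : 𝔟.Hom f B B'),
      HEq (F.map f x) x)
    {n : ℕ} (c : RawCochain 𝔞.unit n) (X Y : Sh 𝔟) (p : Pth (Sh 𝔟) n X Y)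
    (e : PthElts 𝔟 p) :
    HEq (FstarUnit F hF c X Y p e)
      (c _ _ (p.map (sharpF F)) (eltsMap F e)) := by
  have h1 : F.map (Sh.base p.comp) (FstarUnit F hF c X Y p e) =
      (𝔞.unit).cst (by rw [Pth.comp_map]; rfl)
        (c _ _ (p.map (sharpF F)) (eltsMap F e)) :=
    Equiv.apply_symm_apply (Equiv.ofBijective _ (hF (Sh.base p.comp) X.2 Y.2)) _
  exact ((hid _ _).symm.trans (heq_of_eq h1)).trans ((𝔞.unit).cst_heq _ _)

end MVAux4
section MVAux5

variable {k : Type u} [CommRing k]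
variable {𝒰 : Type u} [Category.{u} 𝒰]

theorem fstarUnit_lift_eval {𝒮 : Subcat 𝒰} {𝔞 : GradedCat k 𝒰} {n : ℕ}
    (d : RawCochain 𝔞.unit n) {X Y : Sh 𝔞} (q : Pth (Sh 𝔞) n X Y)
    (h : pIn 𝒮 (q.map (bF 𝔞))) (hX : 𝒮.objs X.1) (hY : 𝒮.objs Y.1) (e : PthElts 𝔞 q) :
    HEq (FstarUnit (restrictProj 𝒮.incl 𝔞) (restrictProj_subcartesian 𝒮.incl 𝔞) d
        (liftO 𝒮 𝔞 X hX) (liftO 𝒮 𝔞 Y hY) (liftPth 𝒮 𝔞 q h hX hY)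
        (liftElts 𝒮 𝔞 e h hX hY))
      (d X Y q e) :=
  (fstarUnit_eval _ _ (by intros; exact HEq.rfl) d _ _ _ _).trans
    (raw_congr d (map_liftPth q h hX hY) (heq_eltsMap_liftElts e h hX hY))

theorem mv_inj (𝔞 : GradedCat k 𝒰) (𝒮 𝒯 : Subcat 𝒰)
    (hcov : ∀ (m : ℕ) (s : NerveTot 𝒰 m),
      (∃ t : NerveTot 𝒮.Cat m, NerveTot.map 𝒮.incl t = s) ∨
      (∃ t : NerveTot 𝒯.Cat m, NerveTot.map 𝒯.incl t = s))
    {n : ℕ} (c c' : RawCochain 𝔞.unit n)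
    (h₁ : FstarUnit (restrictProj 𝒮.incl 𝔞) (restrictProj_subcartesian 𝒮.incl 𝔞) c =
        FstarUnit (restrictProj 𝒮.incl 𝔞) (restrictProj_subcartesian 𝒮.incl 𝔞) c')
    (h₂ : FstarUnit (restrictProj 𝒯.incl 𝔞) (restrictProj_subcartesian 𝒯.incl 𝔞) c =
        FstarUnit (restrictProj 𝒯.incl 𝔞) (restrictProj_subcartesian 𝒯.incl 𝔞) c') :
    c = c' := by
  funext X Y q e
  rcases cover_path hcov q with h | h
  · have hX := pIn_src 𝒮 _ h
    have hY := pIn_tgt 𝒮 _ h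
    have h12 : FstarUnit (restrictProj 𝒮.incl 𝔞) (restrictProj_subcartesian 𝒮.incl 𝔞) c
        (liftO 𝒮 𝔞 X hX) (liftO 𝒮 𝔞 Y hY) (liftPth 𝒮 𝔞 q h hX hY)
        (liftElts 𝒮 𝔞 e h hX hY) =
        FstarUnit (restrictProj 𝒮.incl 𝔞) (restrictProj_subcartesian 𝒮.incl 𝔞) c'
        (liftO 𝒮 𝔞 X hX) (liftO 𝒮 𝔞 Y hY) (liftPth 𝒮 𝔞 q h hX hY)
        (liftElts 𝒮 𝔞 e h hX hY) := by rw [h₁]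
    exact eq_of_heq (((fstarUnit_lift_eval c q h hX hY e).symm.trans
      (heq_of_eq h12)).trans (fstarUnit_lift_eval c' q h hX hY e))
  · have hX := pIn_src 𝒯 _ h
    have hY := pIn_tgt 𝒯 _ h
    have h12 : FstarUnit (restrictProj 𝒯.incl 𝔞) (restrictProj_subcartesian 𝒯.incl 𝔞) c
        (liftO 𝒯 𝔞 X hX) (liftO 𝒯 𝔞 Y hY) (liftPth 𝒯 𝔞 q h hX hY)
        (liftElts 𝒯 𝔞 e h hX hY) =
        FstarUnit (restrictProj 𝒯.incl 𝔞) (restrictProj_subcartesian 𝒯.incl 𝔞) c'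
        (liftO 𝒯 𝔞 X hX) (liftO 𝒯 𝔞 Y hY) (liftPth 𝒯 𝔞 q h hX hY)
        (liftElts 𝒯 𝔞 e h hX hY) := by rw [h₂]
    exact eq_of_heq (((fstarUnit_lift_eval c q h hX hY e).symm.trans
      (heq_of_eq h12)).trans (fstarUnit_lift_eval c' q h hX hY e))

end MVAux5
section MVAux6

variable {k : Type u} [CommRing k]
variable {𝒰 : Type u} [Category.{u} 𝒰]
variable {𝔞 : GradedCat k 𝒰} (M : Bimod k 𝔞)

/-- The multilinearity predicate for partial relative cochains, defined only over paths
lying in a subcategory `𝒮`. -/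
def IsMLP (𝒮 : Subcat 𝒰) : ∀ {n : ℕ} {W : 𝒰} {B : 𝔞.Obj W} {Y : Sh 𝔞} {v : W ⟶ Y.1},
    (∀ (Z : Sh 𝔞) (q : Pth (Sh 𝔞) n Y Z), pIn 𝒮 (q.map (bF 𝔞)) → PthElts 𝔞 q →
      M.M (v ≫ Sh.base q.comp) B Z.2) → Prop
  | 0, _, _, _, _, _ => True
  | n + 1, W, B, Y, v, c =>
      (∀ (Y' Z : Sh 𝔞) (a : Y ⟶ Y') (q : Pth (Sh 𝔞) n Y' Z)
        (hq : pIn 𝒮 ((Pth.cons a q).map (bF 𝔞))) (e : PthElts 𝔞 q)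
        (x x' : 𝔞.Hom (Sh.base a) Y.2 Y'.2),
        c Z (.cons a q) hq (.cons (x + x') e) =
          c Z (.cons a q) hq (.cons x e) + c Z (.cons a q) hq (.cons x' e)) ∧
      (∀ (Y' Z : Sh 𝔞) (a : Y ⟶ Y') (q : Pth (Sh 𝔞) n Y' Z)
        (hq : pIn 𝒮 ((Pth.cons a q).map (bF 𝔞))) (e : PthElts 𝔞 q) (r : k)
        (x : 𝔞.Hom (Sh.base a) Y.2 Y'.2),
        c Z (.cons a q) hq (.cons (r • x) e) = r • c Z (.cons a q) hq (.cons x e)) ∧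
      (∀ (Y' : Sh 𝔞) (a : Y ⟶ Y') (ha : 𝒮.homs (Sh.base a))
        (x : 𝔞.Hom (Sh.base a) Y.2 Y'.2),
        IsMLP 𝒮 (v := v ≫ Sh.base a)
          (fun Z q hq e => M.cst (by simp) (c Z (.cons a q) ⟨ha, hq⟩ (.cons x e))))

variable {M}

/-- A partial family which is pointwise zero is multilinear. -/
theorem isMLP_zero (𝒮 : Subcat 𝒰) : ∀ {n : ℕ} {W : 𝒰} {B : 𝔞.Obj W} {Y : Sh 𝔞}
    {v : W ⟶ Y.1}
    (χ : ∀ (Z : Sh 𝔞) (q : Pth (Sh 𝔞) n Y Z), pIn 𝒮 (q.map (bF 𝔞)) → PthElts 𝔞 q →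
      M.M (v ≫ Sh.base q.comp) B Z.2),
    (∀ Z q h e, χ Z q h e = 0) → IsMLP M 𝒮 χ
  | 0, _, _, _, _, _, _ => trivial
  | n + 1, W, B, Y, v, χ, h0 => by
      refine ⟨?_, ?_, ?_⟩
      · intro Y' Z a q hq e x x'
        rw [h0, h0, h0, add_zero]
      · intro Y' Z a q hq e r x
        rw [h0, h0, smul_zero]
      · intro Y' a ha x
        exact isMLP_zero 𝒮 _ (fun Z q hq e => (congrArg (M.cst _) (h0 _ _ _ _)).trans (bimod_cst_zero _))

/-- A partial family which starts at an object that is not in `𝒮` is vacuously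
multilinear. -/
theorem isMLP_vacuous (𝒮 : Subcat 𝒰) : ∀ {n : ℕ} {W : 𝒰} {B : 𝔞.Obj W} {Y : Sh 𝔞}
    {v : W ⟶ Y.1}
    (χ : ∀ (Z : Sh 𝔞) (q : Pth (Sh 𝔞) n Y Z), pIn 𝒮 (q.map (bF 𝔞)) → PthElts 𝔞 q →
      M.M (v ≫ Sh.base q.comp) B Z.2),
    ¬ 𝒮.objs Y.1 → IsMLP M 𝒮 χ
  | 0, _, _, _, _, _, _ => trivial
  | n + 1, W, B, Y, v, χ, hY => by
      refine ⟨?_, ?_, ?_⟩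
      · intro Y' Z a q hq e x x'
        exact absurd (𝒮.dom_mem _ hq.1) hY
      · intro Y' Z a q hq e r x
        exact absurd (𝒮.dom_mem _ hq.1) hY
      · intro Y' a ha x
        exact absurd (𝒮.dom_mem _ ha) hY

/-- Negation preserves multilinearity of partial families. -/
theorem isMLP_neg (𝒮 : Subcat 𝒰) : ∀ {n : ℕ} {W : 𝒰} {B : 𝔞.Obj W} {Y : Sh 𝔞}
    {v : W ⟶ Y.1}
    (χ χ' : ∀ (Z : Sh 𝔞) (q : Pth (Sh 𝔞) n Y Z), pIn 𝒮 (q.map (bF 𝔞)) → PthElts 𝔞 q →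
      M.M (v ≫ Sh.base q.comp) B Z.2),
    (∀ Z q h e, χ' Z q h e = - χ Z q h e) → IsMLP M 𝒮 χ → IsMLP M 𝒮 χ'
  | 0, _, _, _, _, _, _, _, _ => trivial
  | n + 1, W, B, Y, v, χ, χ', hneg, hml => by
      refine ⟨?_, ?_, ?_⟩
      · intro Y' Z a q hq e x x'
        rw [hneg, hneg, hneg, hml.1 _ _ _ _ hq e x x', neg_add]
      · intro Y' Z a q hq e r x
        rw [hneg, hneg, hml.2.1 _ _ _ _ hq e r x, smul_neg]
      · intro Y' a ha x
        exact isMLP_neg 𝒮 _ _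
          (fun Z q hq e => (congrArg (M.cst _) (hneg _ _ _ _)).trans (bimod_cst_neg _ _)) (hml.2.2 _ _ ha x)

end MVAux6
section MVAux7

variable {k : Type u} [CommRing k]
variable {𝒰 : Type u} [Category.{u} 𝒰]
variable {𝔞 : GradedCat k 𝒰} {M : Bimod k 𝔞}

/-- Gluing two partial multilinear families along a per-path dichotomy yields a
multilinear family. -/
theorem isMLP_glue (𝒬 𝒜 ℬ : Subcat 𝒰) : ∀ {n : ℕ} {W : 𝒰} {B : 𝔞.Obj W} {Y : Sh 𝔞}
    {v : W ⟶ Y.1}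
    (χ : ∀ (Z : Sh 𝔞) (q : Pth (Sh 𝔞) n Y Z), pIn 𝒬 (q.map (bF 𝔞)) → PthElts 𝔞 q →
      M.M (v ≫ Sh.base q.comp) B Z.2)
    (dA : ∀ (Z : Sh 𝔞) (q : Pth (Sh 𝔞) n Y Z), pIn 𝒜 (q.map (bF 𝔞)) → PthElts 𝔞 q →
      M.M (v ≫ Sh.base q.comp) B Z.2)
    (dB : ∀ (Z : Sh 𝔞) (q : Pth (Sh 𝔞) n Y Z), pIn ℬ (q.map (bF 𝔞)) → PthElts 𝔞 q →
      M.M (v ≫ Sh.base q.comp) B Z.2),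
    IsMLP M 𝒜 dA → IsMLP M ℬ dB →
    (∀ Z q (hq : pIn 𝒬 (q.map (bF 𝔞))),
      (∃ h : pIn 𝒜 (q.map (bF 𝔞)), ∀ e, χ Z q hq e = dA Z q h e) ∨
      (∃ h : pIn ℬ (q.map (bF 𝔞)), ∀ e, χ Z q hq e = dB Z q h e)) →
    IsMLP M 𝒬 χ
  | 0, _, _, _, _, _, _, _, _, _, _ => trivial
  | n + 1, W, B, Y, v, χ, dA, dB, hA, hB, hd => by
      refine ⟨?_, ?_, ?_⟩
      · intro Y' Z a q hq e x x'
        rcases hd Z (.cons a q) hq with ⟨h, hu⟩ | ⟨h, hu⟩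
        · rw [hu, hu, hu]; exact hA.1 _ _ _ _ h e x x'
        · rw [hu, hu, hu]; exact hB.1 _ _ _ _ h e x x'
      · intro Y' Z a q hq e r x
        rcases hd Z (.cons a q) hq with ⟨h, hu⟩ | ⟨h, hu⟩
        · rw [hu, hu]; exact hA.2.1 _ _ _ _ h e r x
        · rw [hu, hu]; exact hB.2.1 _ _ _ _ h e r x
      · intro Y' a ha x
        by_cases hAa : 𝒜.homs (Sh.base a)
        · by_cases hBa : ℬ.homs (Sh.base a)
          · refine isMLP_glue 𝒬 𝒜 ℬ _
              (fun Z q h e => M.cst (by simp) (dA Z (.cons a q) ⟨hAa, h⟩ (.cons x e)))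
              (fun Z q h e => M.cst (by simp) (dB Z (.cons a q) ⟨hBa, h⟩ (.cons x e)))
              (hA.2.2 _ a hAa x) (hB.2.2 _ a hBa x) ?_
            intro Z q hq
            rcases hd Z (.cons a q) ⟨ha, hq⟩ with ⟨h, hu⟩ | ⟨h, hu⟩
            · exact Or.inl ⟨h.2, fun e => by rw [hu]⟩
            · exact Or.inr ⟨h.2, fun e => by rw [hu]⟩
          · refine isMLP_glue 𝒬 𝒜 ℬ _
              (fun Z q h e => M.cst (by simp) (dA Z (.cons a q) ⟨hAa, h⟩ (.cons x e)))
              (fun Z q h e => (0 : M.M _ _ _))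
              (hA.2.2 _ a hAa x) (isMLP_zero ℬ _ (fun _ _ _ _ => rfl)) ?_
            intro Z q hq
            rcases hd Z (.cons a q) ⟨ha, hq⟩ with ⟨h, hu⟩ | ⟨h, hu⟩
            · exact Or.inl ⟨h.2, fun e => by rw [hu]⟩
            · exact absurd h.1 hBa
        · by_cases hBa : ℬ.homs (Sh.base a)
          · refine isMLP_glue 𝒬 𝒜 ℬ _
              (fun Z q h e => (0 : M.M _ _ _))
              (fun Z q h e => M.cst (by simp) (dB Z (.cons a q) ⟨hBa, h⟩ (.cons x e)))
              (isMLP_zero 𝒜 _ (fun _ _ _ _ => rfl)) (hB.2.2 _ a hBa x) ?_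
            intro Z q hq
            rcases hd Z (.cons a q) ⟨ha, hq⟩ with ⟨h, hu⟩ | ⟨h, hu⟩
            · exact absurd h.1 hAa
            · exact Or.inr ⟨h.2, fun e => by rw [hu]⟩
          · refine isMLP_glue 𝒬 𝒜 ℬ _
              (fun Z q h e => (0 : M.M _ _ _))
              (fun Z q h e => (0 : M.M _ _ _))
              (isMLP_zero 𝒜 _ (fun _ _ _ _ => rfl))
              (isMLP_zero ℬ _ (fun _ _ _ _ => rfl)) ?_
            intro Z q hq
            rcases hd Z (.cons a q) ⟨ha, hq⟩ with ⟨h, hu⟩ | ⟨h, hu⟩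
            · exact absurd h.1 hAa
            · exact absurd h.1 hBa

end MVAux7
section MVAux8pre

variable {k : Type u} [CommRing k]
variable {𝒰 : Type u} [Category.{u} 𝒰]

/-- Lift of an object of `𝒰` into a subcategory. -/
def liftW (𝒮 : Subcat 𝒰) {W : 𝒰} (hW : 𝒮.objs W) : 𝒮.Cat := ⟨W, hW⟩

/-- Lift of a morphism of `𝒰` into a subcategory. -/
def liftV (𝒮 : Subcat 𝒰) (𝔞 : GradedCat k 𝒰) {W : 𝒰} (hW : 𝒮.objs W) {Y : Sh 𝔞}
    (hY : 𝒮.objs Y.1) {v : W ⟶ Y.1} (hv : 𝒮.homs v) :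
    liftW 𝒮 hW ⟶ (liftO 𝒮 𝔞 Y hY).1 :=
  ⟨v, hv⟩

end MVAux8pre
section MVAux8

variable {k : Type u} [CommRing k]
variable {𝒰 : Type u} [Category.{u} 𝒰]

/-- Transfer of multilinearity from a cochain on the restricted graded category to the
corresponding partial family on the ambient one. -/
theorem isMLP_liftTransfer (𝒮 : Subcat 𝒰) (𝔞 : GradedCat k 𝒰) :
    ∀ {n : ℕ} {W : 𝒰} (hW : 𝒮.objs W) {B : 𝔞.Obj W} {Y : Sh 𝔞} (hY : 𝒮.objs Y.1)
      {v : W ⟶ Y.1} (hv : 𝒮.homs v)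
      (χ : ∀ (Zr : Sh (𝔞.restrict 𝒮.incl))
        (qr : Pth (Sh (𝔞.restrict 𝒮.incl)) n (liftO 𝒮 𝔞 Y hY) Zr),
        PthElts (𝔞.restrict 𝒮.incl) qr →
        ((𝔞.restrict 𝒮.incl).unit).M
          (liftV 𝒮 𝔞 hW hY hv ≫ Sh.base qr.comp)
          B Zr.2),
      IsML ((𝔞.restrict 𝒮.incl).unit) χ →
      ∀ (d : ∀ (Z : Sh 𝔞) (q : Pth (Sh 𝔞) n Y Z), pIn 𝒮 (q.map (bF 𝔞)) →
        PthElts 𝔞 q → (𝔞.unit).M (v ≫ Sh.base q.comp) B Z.2),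
      (∀ Z q (h : pIn 𝒮 (q.map (bF 𝔞))) e,
        HEq (d Z q h e)
          (χ (liftO 𝒮 𝔞 Z (pIn_tgt 𝒮 _ h)) (liftPth 𝒮 𝔞 q h hY (pIn_tgt 𝒮 _ h))
            (liftElts 𝒮 𝔞 e h hY (pIn_tgt 𝒮 _ h)))) →
      IsMLP (𝔞.unit) 𝒮 d
  | 0, _, _, _, _, _, _, _, _, _, _, _ => trivial
  | n + 1, W, hW, B, Y, hY, v, hv, χ, hχ, d, hd => by
      refine ⟨?_, ?_, ?_⟩
      · intro Y' Z a q hq e x x'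
        have hZ := pIn_tgt 𝒮 _ hq
        have hT : 𝒮.incl.map
            (liftV 𝒮 𝔞 hW hY hv ≫
              Sh.base ((liftPth 𝒮 𝔞 (.cons a q) hq hY hZ).comp)) =
            v ≫ Sh.base (Pth.cons a q).comp := by
          show v ≫ 𝒮.incl.map (Sh.base ((liftPth 𝒮 𝔞 (.cons a q) hq hY hZ).comp)) = _
          exact congrArg (v ≫ ·) (liftPth_comp (𝒮 := 𝒮) (𝔞 := 𝔞) (.cons a q) hq hY hZ)
        have key : ∀ z : 𝔞.Hom (Sh.base a) Y.2 Y'.2,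
            d Z (.cons a q) hq (.cons z e) =
            𝔞.Hcast hT (χ (liftO 𝒮 𝔞 Z hZ) (liftPth 𝒮 𝔞 (.cons a q) hq hY hZ)
              (liftElts 𝒮 𝔞 (.cons z e) hq hY hZ)) := fun z =>
          eq_of_heq ((hd Z (.cons a q) hq (.cons z e)).trans (𝔞.Hcast_heq hT _).symm)
        rw [key (x + x'), key x, key x']
        refine (congrArg (𝔞.Hcast hT) ?_).trans (𝔞.Hcast_add hT _ _)
        exact hχ.1 (liftO 𝒮 𝔞 Y' (𝒮.cod_mem (Sh.base a) hq.1)) (liftO 𝒮 𝔞 Z hZ)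
          ⟨Sh.base a, hq.1⟩ (liftPth 𝒮 𝔞 q hq.2 _ hZ) (liftElts 𝒮 𝔞 e hq.2 _ hZ) x x'
      · intro Y' Z a q hq e r x
        have hZ := pIn_tgt 𝒮 _ hq
        have hT : 𝒮.incl.map
            (liftV 𝒮 𝔞 hW hY hv ≫
              Sh.base ((liftPth 𝒮 𝔞 (.cons a q) hq hY hZ).comp)) =
            v ≫ Sh.base (Pth.cons a q).comp := by
          show v ≫ 𝒮.incl.map (Sh.base ((liftPth 𝒮 𝔞 (.cons a q) hq hY hZ).comp)) = _
          exact congrArg (v ≫ ·) (liftPth_comp (𝒮 := 𝒮) (𝔞 := 𝔞) (.cons a q) hq hY hZ)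
        have key : ∀ z : 𝔞.Hom (Sh.base a) Y.2 Y'.2,
            d Z (.cons a q) hq (.cons z e) =
            𝔞.Hcast hT (χ (liftO 𝒮 𝔞 Z hZ) (liftPth 𝒮 𝔞 (.cons a q) hq hY hZ)
              (liftElts 𝒮 𝔞 (.cons z e) hq hY hZ)) := fun z =>
          eq_of_heq ((hd Z (.cons a q) hq (.cons z e)).trans (𝔞.Hcast_heq hT _).symm)
        rw [key (r • x), key x]
        refine (congrArg (𝔞.Hcast hT) ?_).trans (𝔞.Hcast_smul hT _ _)
        exact hχ.2.1 (liftO 𝒮 𝔞 Y' (𝒮.cod_mem (Sh.base a) hq.1)) (liftO 𝒮 𝔞 Z hZ)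
          ⟨Sh.base a, hq.1⟩ (liftPth 𝒮 𝔞 q hq.2 _ hZ) (liftElts 𝒮 𝔞 e hq.2 _ hZ) r x
      · intro Y' a ha x
        refine isMLP_liftTransfer 𝒮 𝔞 hW (𝒮.cod_mem (Sh.base a) ha)
          (𝒮.comp_mem v (Sh.base a) hv ha)
          (fun Zr qr er => ((𝔞.restrict 𝒮.incl).unit).cst
            (by rw [Pth.comp_cons, Sh.base_comp, ← Category.assoc]; rfl)
            (χ Zr (.cons (show liftO 𝒮 𝔞 Y hY ⟶ liftO 𝒮 𝔞 Y' (𝒮.cod_mem (Sh.base a) ha)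
              from ⟨Sh.base a, ha⟩) qr) (.cons x er)))
          (hχ.2.2 (liftO 𝒮 𝔞 Y' (𝒮.cod_mem (Sh.base a) ha)) ⟨Sh.base a, ha⟩ x)
          _ ?_
        intro Z q h e
        exact ((𝔞.unit).cst_heq _ _).trans
          ((hd Z (.cons a q) ⟨ha, h⟩ (.cons x e)).trans
            (((𝔞.restrict 𝒮.incl).unit).cst_heq _ _).symm)

end MVAux8
section MVAux9

variable {k : Type u} [CommRing k]
variable {𝒰 : Type u} [Category.{u} 𝒰]

/-- Transfer of multilinearity from a partial family on the ambient graded category to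
the corresponding cochain on the restricted one. -/
theorem isML_liftTransfer (𝒮 : Subcat 𝒰) (𝔞 : GradedCat k 𝒰) :
    ∀ {n : ℕ} {Wr : 𝒮.Cat} {B : 𝔞.Obj Wr.1} {Yr : Sh (𝔞.restrict 𝒮.incl)}
      {vr : Wr ⟶ Yr.1}
      (χ : ∀ (Zr : Sh (𝔞.restrict 𝒮.incl)) (qr : Pth (Sh (𝔞.restrict 𝒮.incl)) n Yr Zr),
        PthElts (𝔞.restrict 𝒮.incl) qr →
        ((𝔞.restrict 𝒮.incl).unit).M (vr ≫ Sh.base qr.comp) B Zr.2)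
      (d : ∀ (Z : Sh 𝔞) (q : Pth (Sh 𝔞) n ((sharpF (restrictProj 𝒮.incl 𝔞)).obj Yr) Z),
        pIn 𝒮 (q.map (bF 𝔞)) → PthElts 𝔞 q →
        (𝔞.unit).M (𝒮.incl.map vr ≫ Sh.base q.comp) B Z.2),
      IsMLP (𝔞.unit) 𝒮 d →
      (∀ Zr qr er, HEq (χ Zr qr er)
        (d ((sharpF (restrictProj 𝒮.incl 𝔞)).obj Zr)
          (qr.map (sharpF (restrictProj 𝒮.incl 𝔞))) (pIn_map_sharp 𝒮 𝔞 qr)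
          (eltsMap (restrictProj 𝒮.incl 𝔞) er))) →
      IsML ((𝔞.restrict 𝒮.incl).unit) χ
  | 0, _, _, _, _, _, _, _, _ => trivial
  | n + 1, Wr, B, Yr, vr, χ, d, hml, hχ => by
      refine ⟨?_, ?_, ?_⟩
      · intro Yr' Zr ar qr er x x'
        have hT : (𝒮.incl.map vr ≫ Sh.base
              ((Pth.map (sharpF (restrictProj 𝒮.incl 𝔞)) (Pth.cons ar qr)).comp)) =
            𝒮.incl.map (vr ≫ Sh.base (Pth.cons ar qr).comp) := by
          rw [sharp_base_comp]; rfl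
        have key : ∀ z : ((𝔞.restrict 𝒮.incl).Hom (Sh.base ar) Yr.2 Yr'.2),
            χ Zr (.cons ar qr) (.cons z er) =
            𝔞.Hcast hT (d _ ((Pth.cons ar qr).map (sharpF (restrictProj 𝒮.incl 𝔞)))
              (pIn_map_sharp 𝒮 𝔞 _)
              (eltsMap (restrictProj 𝒮.incl 𝔞) (.cons z er))) := fun z =>
          eq_of_heq ((hχ Zr (.cons ar qr) (.cons z er)).trans (𝔞.Hcast_heq hT _).symm)
        rw [key (x + x'), key x, key x']
        refine (congrArg (𝔞.Hcast hT) ?_).trans (𝔞.Hcast_add hT _ _)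
        exact hml.1 ((sharpF (restrictProj 𝒮.incl 𝔞)).obj Yr')
          ((sharpF (restrictProj 𝒮.incl 𝔞)).obj Zr)
          ((sharpF (restrictProj 𝒮.incl 𝔞)).map ar)
          (qr.map (sharpF (restrictProj 𝒮.incl 𝔞)))
          (pIn_map_sharp 𝒮 𝔞 (Pth.cons ar qr))
          (eltsMap (restrictProj 𝒮.incl 𝔞) er) x x'
      · intro Yr' Zr ar qr er r x
        have hT : (𝒮.incl.map vr ≫ Sh.base
              ((Pth.map (sharpF (restrictProj 𝒮.incl 𝔞)) (Pth.cons ar qr)).comp)) =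
            𝒮.incl.map (vr ≫ Sh.base (Pth.cons ar qr).comp) := by
          rw [sharp_base_comp]; rfl
        have key : ∀ z : ((𝔞.restrict 𝒮.incl).Hom (Sh.base ar) Yr.2 Yr'.2),
            χ Zr (.cons ar qr) (.cons z er) =
            𝔞.Hcast hT (d _ ((Pth.cons ar qr).map (sharpF (restrictProj 𝒮.incl 𝔞)))
              (pIn_map_sharp 𝒮 𝔞 _)
              (eltsMap (restrictProj 𝒮.incl 𝔞) (.cons z er))) := fun z =>
          eq_of_heq ((hχ Zr (.cons ar qr) (.cons z er)).trans (𝔞.Hcast_heq hT _).symm)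
        rw [key (r • x), key x]
        refine (congrArg (𝔞.Hcast hT) ?_).trans (𝔞.Hcast_smul hT _ _)
        exact hml.2.1 ((sharpF (restrictProj 𝒮.incl 𝔞)).obj Yr')
          ((sharpF (restrictProj 𝒮.incl 𝔞)).obj Zr)
          ((sharpF (restrictProj 𝒮.incl 𝔞)).map ar)
          (qr.map (sharpF (restrictProj 𝒮.incl 𝔞)))
          (pIn_map_sharp 𝒮 𝔞 (Pth.cons ar qr))
          (eltsMap (restrictProj 𝒮.incl 𝔞) er) r x
      · intro Yr' ar x
        refine isML_liftTransfer 𝒮 𝔞 _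
          (fun Z q h e => (𝔞.unit).cst
            (by rw [Pth.comp_cons, Sh.base_comp, Functor.map_comp]; exact (Category.assoc _ _ _).symm)
            (d Z (.cons ((sharpF (restrictProj 𝒮.incl 𝔞)).map ar) q)
              ⟨(Sh.base ar).2, h⟩ (.cons x e)))
          (hml.2.2 ((sharpF (restrictProj 𝒮.incl 𝔞)).obj Yr')
            ((sharpF (restrictProj 𝒮.incl 𝔞)).map ar) (Sh.base ar).2 x) ?_
        intro Zr qr er
        exact (((𝔞.restrict 𝒮.incl).unit).cst_heq _ _).trans
          ((hχ Zr (.cons ar qr) (.cons x er)).trans ((𝔞.unit).cst_heq _ _).symm)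

end MVAux9
section MVAux10

variable {k : Type u} [CommRing k]
variable {𝒰 : Type u} [Category.{u} 𝒰]

/-- The total subcategory. -/
def univSub (𝒰 : Type u) [Category.{u} 𝒰] : Subcat 𝒰 where
  objs _ := True
  homs _ := True
  dom_mem _ _ := trivial
  cod_mem _ _ := trivial
  id_mem _ _ := trivial
  comp_mem _ _ _ _ := trivial

theorem pIn_univ : ∀ {n : ℕ} {X Y : 𝒰} (p : Pth 𝒰 n X Y), pIn (univSub 𝒰) p
  | _, _, _, .nil _ => trivial
  | _, _, _, .cons _ p => ⟨trivial, pIn_univ p⟩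

theorem isML_of_isMLP {𝔞 : GradedCat k 𝒰} {M : Bimod k 𝔞} :
    ∀ {n : ℕ} {W : 𝒰} {B : 𝔞.Obj W} {Y : Sh 𝔞} {v : W ⟶ Y.1}
      (χ : ∀ (Z : Sh 𝔞) (q : Pth (Sh 𝔞) n Y Z), PthElts 𝔞 q →
        M.M (v ≫ Sh.base q.comp) B Z.2)
      (d : ∀ (Z : Sh 𝔞) (q : Pth (Sh 𝔞) n Y Z), pIn (univSub 𝒰) (q.map (bF 𝔞)) →
        PthElts 𝔞 q → M.M (v ≫ Sh.base q.comp) B Z.2),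
      (∀ Z q h e, d Z q h e = χ Z q e) → IsMLP M (univSub 𝒰) d → IsML M χ
  | 0, _, _, _, _, _, _, _, _ => trivial
  | n + 1, W, B, Y, v, χ, d, hd, hml => by
      refine ⟨?_, ?_, ?_⟩
      · intro Y' Z a q e x x'
        rw [← hd Z (.cons a q) (pIn_univ _) (.cons (x + x') e),
          ← hd Z (.cons a q) (pIn_univ _) (.cons x e),
          ← hd Z (.cons a q) (pIn_univ _) (.cons x' e)]
        exact hml.1 _ _ _ _ _ e x x'
      · intro Y' Z a q e r x
        rw [← hd Z (.cons a q) (pIn_univ _) (.cons (r • x) e),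
          ← hd Z (.cons a q) (pIn_univ _) (.cons x e)]
        exact hml.2.1 _ _ _ _ _ e r x
      · intro Y' a x
        refine isML_of_isMLP _
          (fun Z q h e => M.cst (by simp)
            (d Z (.cons a q) ⟨trivial, h⟩ (.cons x e))) ?_
          (hml.2.2 _ a trivial x)
        intro Z q h e
        exact congrArg (M.cst _) (hd Z (.cons a q) ⟨trivial, h⟩ (.cons x e))

end MVAux10
section MVAux11

variable {k : Type u} [CommRing k]
variable {𝒰 : Type u} [Category.{u} 𝒰]

theorem isML_zero {𝔞 : GradedCat k 𝒰} {M : Bimod k 𝔞} :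
    ∀ {n : ℕ} {W : 𝒰} {B : 𝔞.Obj W} {Y : Sh 𝔞} {v : W ⟶ Y.1}
      (χ : ∀ (Z : Sh 𝔞) (q : Pth (Sh 𝔞) n Y Z), PthElts 𝔞 q →
        M.M (v ≫ Sh.base q.comp) B Z.2),
      (∀ Z q e, χ Z q e = 0) → IsML M χ
  | 0, _, _, _, _, _, _ => trivial
  | n + 1, W, B, Y, v, χ, h0 => by
      refine ⟨?_, ?_, ?_⟩
      · intro Y' Z a q e x x'
        rw [h0, h0, h0, add_zero]
      · intro Y' Z a q e r x
        rw [h0, h0, smul_zero]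
      · intro Y' a x
        exact isML_zero _ (fun Z q e => (congrArg (M.cst _) (h0 _ _ _)).trans (bimod_cst_zero _))

variable (𝒮 𝒯 : Subcat 𝒰) (𝔞 : GradedCat k 𝒰)

theorem interMap_liftPth₁ : ∀ {n : ℕ} {X Y : Sh 𝔞} (q : Pth (Sh 𝔞) n X Y)
    (hi : pIn (𝒮.inter 𝒯) (q.map (bF 𝔞))) (hX : (𝒮.inter 𝒯).objs X.1)
    (hY : (𝒮.inter 𝒯).objs Y.1) (hq : pIn 𝒮 (q.map (bF 𝔞))) (hX' : 𝒮.objs X.1)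
    (hY' : 𝒮.objs Y.1),
    Pth.map (sharpF (interRes₁ 𝒮 𝒯 𝔞)) (liftPth (𝒮.inter 𝒯) 𝔞 q hi hX hY) =
      liftPth 𝒮 𝔞 q hq hX' hY'
  | _, _, _, .nil X, _, _, _, _, _, _ => rfl
  | _, _, _, .cons f q, hi, hX, hY, hq, hX', hY' =>
      congrArg (Pth.cons _) (interMap_liftPth₁ q hi.2 _ hY hq.2 _ hY')

theorem interMap_liftPth₂ : ∀ {n : ℕ} {X Y : Sh 𝔞} (q : Pth (Sh 𝔞) n X Y)
    (hi : pIn (𝒮.inter 𝒯) (q.map (bF 𝔞))) (hX : (𝒮.inter 𝒯).objs X.1)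
    (hY : (𝒮.inter 𝒯).objs Y.1) (hq : pIn 𝒯 (q.map (bF 𝔞))) (hX' : 𝒯.objs X.1)
    (hY' : 𝒯.objs Y.1),
    Pth.map (sharpF (interRes₂ 𝒮 𝒯 𝔞)) (liftPth (𝒮.inter 𝒯) 𝔞 q hi hX hY) =
      liftPth 𝒯 𝔞 q hq hX' hY'
  | _, _, _, .nil X, _, _, _, _, _, _ => rfl
  | _, _, _, .cons f q, hi, hX, hY, hq, hX', hY' =>
      congrArg (Pth.cons _) (interMap_liftPth₂ q hi.2 _ hY hq.2 _ hY')

theorem interElts₁ : ∀ {n : ℕ} {X Y : Sh 𝔞} {q : Pth (Sh 𝔞) n X Y} (e : PthElts 𝔞 q)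
    (hi : pIn (𝒮.inter 𝒯) (q.map (bF 𝔞))) (hX : (𝒮.inter 𝒯).objs X.1)
    (hY : (𝒮.inter 𝒯).objs Y.1) (hq : pIn 𝒮 (q.map (bF 𝔞))) (hX' : 𝒮.objs X.1)
    (hY' : 𝒮.objs Y.1),
    HEq (eltsMap (interRes₁ 𝒮 𝒯 𝔞) (liftElts (𝒮.inter 𝒯) 𝔞 e hi hX hY))
      (liftElts 𝒮 𝔞 e hq hX' hY')
  | _, _, _, _, .nil X, _, _, _, _, _, _ => HEq.rfl
  | _, _, _, _, .cons x e, hi, hX, hY, hq, hX', hY' =>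
      pthElts_cons_heq rfl HEq.rfl
        (heq_of_eq (interMap_liftPth₁ 𝒮 𝒯 𝔞 _ hi.2 _ hY hq.2 _ hY')) HEq.rfl
        (interElts₁ e hi.2 _ hY hq.2 _ hY')

theorem interElts₂ : ∀ {n : ℕ} {X Y : Sh 𝔞} {q : Pth (Sh 𝔞) n X Y} (e : PthElts 𝔞 q)
    (hi : pIn (𝒮.inter 𝒯) (q.map (bF 𝔞))) (hX : (𝒮.inter 𝒯).objs X.1)
    (hY : (𝒮.inter 𝒯).objs Y.1) (hq : pIn 𝒯 (q.map (bF 𝔞))) (hX' : 𝒯.objs X.1)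
    (hY' : 𝒯.objs Y.1),
    HEq (eltsMap (interRes₂ 𝒮 𝒯 𝔞) (liftElts (𝒮.inter 𝒯) 𝔞 e hi hX hY))
      (liftElts 𝒯 𝔞 e hq hX' hY')
  | _, _, _, _, .nil X, _, _, _, _, _, _ => HEq.rfl
  | _, _, _, _, .cons x e, hi, hX, hY, hq, hX', hY' =>
      pthElts_cons_heq rfl HEq.rfl
        (heq_of_eq (interMap_liftPth₂ 𝒮 𝒯 𝔞 _ hi.2 _ hY hq.2 _ hY')) HEq.rfl
        (interElts₂ e hi.2 _ hY hq.2 _ hY')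

theorem map_sharp_inter₁ : ∀ {n : ℕ} {Xr Yr : Sh (𝔞.restrict (𝒮.inter 𝒯).incl)}
    (p : Pth (Sh (𝔞.restrict (𝒮.inter 𝒯).incl)) n Xr Yr),
    Pth.map (sharpF (restrictProj 𝒮.incl 𝔞)) (Pth.map (sharpF (interRes₁ 𝒮 𝒯 𝔞)) p) =
      Pth.map (sharpF (restrictProj (𝒮.inter 𝒯).incl 𝔞)) p
  | _, _, _, .nil X => rfl
  | _, _, _, .cons f p => congrArg (Pth.cons _) (map_sharp_inter₁ p)

theorem map_sharp_inter₂ : ∀ {n : ℕ} {Xr Yr : Sh (𝔞.restrict (𝒮.inter 𝒯).incl)}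
    (p : Pth (Sh (𝔞.restrict (𝒮.inter 𝒯).incl)) n Xr Yr),
    Pth.map (sharpF (restrictProj 𝒯.incl 𝔞)) (Pth.map (sharpF (interRes₂ 𝒮 𝒯 𝔞)) p) =
      Pth.map (sharpF (restrictProj (𝒮.inter 𝒯).incl 𝔞)) p
  | _, _, _, .nil X => rfl
  | _, _, _, .cons f p => congrArg (Pth.cons _) (map_sharp_inter₂ p)

theorem elts_sharp_inter₁ : ∀ {n : ℕ} {Xr Yr : Sh (𝔞.restrict (𝒮.inter 𝒯).incl)}
    {p : Pth (Sh (𝔞.restrict (𝒮.inter 𝒯).incl)) n Xr Yr}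
    (e : PthElts (𝔞.restrict (𝒮.inter 𝒯).incl) p),
    HEq (eltsMap (restrictProj 𝒮.incl 𝔞) (eltsMap (interRes₁ 𝒮 𝒯 𝔞) e))
      (eltsMap (restrictProj (𝒮.inter 𝒯).incl 𝔞) e)
  | _, _, _, _, .nil X => HEq.rfl
  | _, _, _, _, .cons x e =>
      pthElts_cons_heq rfl HEq.rfl (heq_of_eq (map_sharp_inter₁ 𝒮 𝒯 𝔞 _)) HEq.rfl
        (elts_sharp_inter₁ e)

theorem elts_sharp_inter₂ : ∀ {n : ℕ} {Xr Yr : Sh (𝔞.restrict (𝒮.inter 𝒯).incl)}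
    {p : Pth (Sh (𝔞.restrict (𝒮.inter 𝒯).incl)) n Xr Yr}
    (e : PthElts (𝔞.restrict (𝒮.inter 𝒯).incl) p),
    HEq (eltsMap (restrictProj 𝒯.incl 𝔞) (eltsMap (interRes₂ 𝒮 𝒯 𝔞) e))
      (eltsMap (restrictProj (𝒮.inter 𝒯).incl 𝔞) e)
  | _, _, _, _, .nil X => HEq.rfl
  | _, _, _, _, .cons x e =>
      pthElts_cons_heq rfl HEq.rfl (heq_of_eq (map_sharp_inter₂ 𝒮 𝒯 𝔞 _)) HEq.rfl
        (elts_sharp_inter₂ e)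

end MVAux11
section MVAux12

variable {k : Type u} [CommRing k]
variable {𝒰 : Type u} [Category.{u} 𝒰]

theorem agree_lift (𝒮 𝒯 : Subcat 𝒰) (𝔞 : GradedCat k 𝒰) {n : ℕ}
    (c₁ : RawCochain (𝔞.restrict 𝒮.incl).unit n)
    (c₂ : RawCochain (𝔞.restrict 𝒯.incl).unit n)
    (h₁₂ : FstarUnit (interRes₁ 𝒮 𝒯 𝔞) (interRes₁_subcartesian 𝒮 𝒯 𝔞) c₁ =
      FstarUnit (interRes₂ 𝒮 𝒯 𝔞) (interRes₂_subcartesian 𝒮 𝒯 𝔞) c₂)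
    {X Y : Sh 𝔞} (q : Pth (Sh 𝔞) n X Y) (hS : pIn 𝒮 (q.map (bF 𝔞)))
    (hT : pIn 𝒯 (q.map (bF 𝔞))) (e : PthElts 𝔞 q)
    (hXS : 𝒮.objs X.1) (hYS : 𝒮.objs Y.1) (hXT : 𝒯.objs X.1) (hYT : 𝒯.objs Y.1) :
    HEq (c₁ _ _ (liftPth 𝒮 𝔞 q hS hXS hYS) (liftElts 𝒮 𝔞 e hS hXS hYS))
      (c₂ _ _ (liftPth 𝒯 𝔞 q hT hXT hYT) (liftElts 𝒯 𝔞 e hT hXT hYT)) := by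
  have hi : pIn (𝒮.inter 𝒯) (q.map (bF 𝔞)) := (pIn_inter_iff 𝒮 𝒯 _).mpr ⟨hS, hT⟩
  have hXi : (𝒮.inter 𝒯).objs X.1 := ⟨hXS, hXT⟩
  have hYi : (𝒮.inter 𝒯).objs Y.1 := ⟨hYS, hYT⟩
  have e1 : HEq (FstarUnit (interRes₁ 𝒮 𝒯 𝔞) (interRes₁_subcartesian 𝒮 𝒯 𝔞) c₁
      (liftO (𝒮.inter 𝒯) 𝔞 X hXi) (liftO (𝒮.inter 𝒯) 𝔞 Y hYi)
      (liftPth (𝒮.inter 𝒯) 𝔞 q hi hXi hYi) (liftElts (𝒮.inter 𝒯) 𝔞 e hi hXi hYi))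
      (c₁ _ _ (liftPth 𝒮 𝔞 q hS hXS hYS) (liftElts 𝒮 𝔞 e hS hXS hYS)) :=
    (fstarUnit_eval _ _ (by intros; exact HEq.rfl) c₁ _ _ _ _).trans
      (raw_congr c₁ (interMap_liftPth₁ 𝒮 𝒯 𝔞 q hi hXi hYi hS hXS hYS)
        (interElts₁ 𝒮 𝒯 𝔞 e hi hXi hYi hS hXS hYS))
  have e2 : HEq (FstarUnit (interRes₂ 𝒮 𝒯 𝔞) (interRes₂_subcartesian 𝒮 𝒯 𝔞) c₂
      (liftO (𝒮.inter 𝒯) 𝔞 X hXi) (liftO (𝒮.inter 𝒯) 𝔞 Y hYi)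
      (liftPth (𝒮.inter 𝒯) 𝔞 q hi hXi hYi) (liftElts (𝒮.inter 𝒯) 𝔞 e hi hXi hYi))
      (c₂ _ _ (liftPth 𝒯 𝔞 q hT hXT hYT) (liftElts 𝒯 𝔞 e hT hXT hYT)) :=
    (fstarUnit_eval _ _ (by intros; exact HEq.rfl) c₂ _ _ _ _).trans
      (raw_congr c₂ (interMap_liftPth₂ 𝒮 𝒯 𝔞 q hi hXi hYi hT hXT hYT)
        (interElts₂ 𝒮 𝒯 𝔞 e hi hXi hYi hT hXT hYT))
  have h3 : FstarUnit (interRes₁ 𝒮 𝒯 𝔞) (interRes₁_subcartesian 𝒮 𝒯 𝔞) c₁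
      (liftO (𝒮.inter 𝒯) 𝔞 X hXi) (liftO (𝒮.inter 𝒯) 𝔞 Y hYi)
      (liftPth (𝒮.inter 𝒯) 𝔞 q hi hXi hYi) (liftElts (𝒮.inter 𝒯) 𝔞 e hi hXi hYi) =
      FstarUnit (interRes₂ 𝒮 𝒯 𝔞) (interRes₂_subcartesian 𝒮 𝒯 𝔞) c₂
      (liftO (𝒮.inter 𝒯) 𝔞 X hXi) (liftO (𝒮.inter 𝒯) 𝔞 Y hYi)
      (liftPth (𝒮.inter 𝒯) 𝔞 q hi hXi hYi) (liftElts (𝒮.inter 𝒯) 𝔞 e hi hXi hYi) := by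
    rw [h₁₂]
  exact e1.symm.trans ((heq_of_eq h3).trans e2)

end MVAux12
section MVAux13

variable {k : Type u} [CommRing k]
variable {𝒰 : Type u} [Category.{u} 𝒰]

theorem mv_mid (𝔞 : GradedCat k 𝒰) (𝒮 𝒯 : Subcat 𝒰)
    (hcov : ∀ (m : ℕ) (s : NerveTot 𝒰 m),
      (∃ t : NerveTot 𝒮.Cat m, NerveTot.map 𝒮.incl t = s) ∨
      (∃ t : NerveTot 𝒯.Cat m, NerveTot.map 𝒯.incl t = s))
    {n : ℕ} (c₁ : RawCochain (𝔞.restrict 𝒮.incl).unit n)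
    (c₂ : RawCochain (𝔞.restrict 𝒯.incl).unit n)
    (hm₁ : IsCochain (𝔞.restrict 𝒮.incl).unit c₁)
    (hm₂ : IsCochain (𝔞.restrict 𝒯.incl).unit c₂)
    (h₁₂ : FstarUnit (interRes₁ 𝒮 𝒯 𝔞) (interRes₁_subcartesian 𝒮 𝒯 𝔞) c₁ =
      FstarUnit (interRes₂ 𝒮 𝒯 𝔞) (interRes₂_subcartesian 𝒮 𝒯 𝔞) c₂) :
    ∃ c : RawCochain 𝔞.unit n, IsCochain 𝔞.unit c ∧
      FstarUnit (restrictProj 𝒮.incl 𝔞) (restrictProj_subcartesian 𝒮.incl 𝔞) c = c₁ ∧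
      FstarUnit (restrictProj 𝒯.incl 𝔞) (restrictProj_subcartesian 𝒯.incl 𝔞) c = c₂ := by
  classical
  obtain ⟨cL, hpos, hneg⟩ : ∃ cL : RawCochain 𝔞.unit n,
      (∀ (X Y : Sh 𝔞) (q : Pth (Sh 𝔞) n X Y) (h : pIn 𝒮 (q.map (bF 𝔞)))
        (e : PthElts 𝔞 q),
        cL X Y q e = 𝔞.Hcast (liftPth_comp q h (pIn_src 𝒮 _ h) (pIn_tgt 𝒮 _ h))
          (c₁ _ _ (liftPth 𝒮 𝔞 q h (pIn_src 𝒮 _ h) (pIn_tgt 𝒮 _ h))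
            (liftElts 𝒮 𝔞 e h (pIn_src 𝒮 _ h) (pIn_tgt 𝒮 _ h)))) ∧
      (∀ (X Y : Sh 𝔞) (q : Pth (Sh 𝔞) n X Y) (h : ¬ pIn 𝒮 (q.map (bF 𝔞)))
        (e : PthElts 𝔞 q),
        cL X Y q e = 𝔞.Hcast (liftPth_comp q ((cover_path hcov q).resolve_left h)
            (pIn_src 𝒯 _ ((cover_path hcov q).resolve_left h))
            (pIn_tgt 𝒯 _ ((cover_path hcov q).resolve_left h)))
          (c₂ _ _ (liftPth 𝒯 𝔞 q ((cover_path hcov q).resolve_left h)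
              (pIn_src 𝒯 _ ((cover_path hcov q).resolve_left h))
              (pIn_tgt 𝒯 _ ((cover_path hcov q).resolve_left h)))
            (liftElts 𝒯 𝔞 e ((cover_path hcov q).resolve_left h)
              (pIn_src 𝒯 _ ((cover_path hcov q).resolve_left h))
              (pIn_tgt 𝒯 _ ((cover_path hcov q).resolve_left h))))) := by
    refine ⟨fun X Y q e =>
      if h : pIn 𝒮 (q.map (bF 𝔞)) then
        𝔞.Hcast (liftPth_comp q h (pIn_src 𝒮 _ h) (pIn_tgt 𝒮 _ h))
          (c₁ _ _ (liftPth 𝒮 𝔞 q h (pIn_src 𝒮 _ h) (pIn_tgt 𝒮 _ h))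
            (liftElts 𝒮 𝔞 e h (pIn_src 𝒮 _ h) (pIn_tgt 𝒮 _ h)))
      else
        𝔞.Hcast (liftPth_comp q ((cover_path hcov q).resolve_left h)
            (pIn_src 𝒯 _ ((cover_path hcov q).resolve_left h))
            (pIn_tgt 𝒯 _ ((cover_path hcov q).resolve_left h)))
          (c₂ _ _ (liftPth 𝒯 𝔞 q ((cover_path hcov q).resolve_left h)
              (pIn_src 𝒯 _ ((cover_path hcov q).resolve_left h))
              (pIn_tgt 𝒯 _ ((cover_path hcov q).resolve_left h)))
            (liftElts 𝒯 𝔞 e ((cover_path hcov q).resolve_left h)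
              (pIn_src 𝒯 _ ((cover_path hcov q).resolve_left h))
              (pIn_tgt 𝒯 _ ((cover_path hcov q).resolve_left h)))),
      fun X Y q h e => dif_pos h, fun X Y q h e => dif_neg h⟩
  refine ⟨cL, ?_, ?_, ?_⟩
  · -- multilinearity of the glued cochain
    intro X
    refine isML_of_isMLP (toRel 𝔞.unit cL X) (fun Z q h e => toRel 𝔞.unit cL X Z q e)
      (fun _ _ _ _ => rfl) ?_
    refine isMLP_glue (univSub 𝒰) 𝒮 𝒯 (fun Z q h e => toRel 𝔞.unit cL X Z q e)
      (fun Z q h e => (𝔞.unit).cst (by simp)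
        (𝔞.Hcast (liftPth_comp q h (pIn_src 𝒮 _ h) (pIn_tgt 𝒮 _ h))
          (c₁ _ _ (liftPth 𝒮 𝔞 q h (pIn_src 𝒮 _ h) (pIn_tgt 𝒮 _ h))
            (liftElts 𝒮 𝔞 e h (pIn_src 𝒮 _ h) (pIn_tgt 𝒮 _ h)))))
      (fun Z q h e => (𝔞.unit).cst (by simp)
        (𝔞.Hcast (liftPth_comp q h (pIn_src 𝒯 _ h) (pIn_tgt 𝒯 _ h))
          (c₂ _ _ (liftPth 𝒯 𝔞 q h (pIn_src 𝒯 _ h) (pIn_tgt 𝒯 _ h))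
            (liftElts 𝒯 𝔞 e h (pIn_src 𝒯 _ h) (pIn_tgt 𝒯 _ h)))))
      ?_ ?_ ?_
    · by_cases hXS : 𝒮.objs X.1
      · refine isMLP_liftTransfer 𝒮 𝔞 hXS hXS (𝒮.id_mem X.1 hXS)
          (toRel ((𝔞.restrict 𝒮.incl).unit) c₁ (liftO 𝒮 𝔞 X hXS)) (hm₁ _) _ ?_
        intro Z q h e
        exact ((𝔞.unit).cst_heq _ _).trans ((𝔞.Hcast_heq _ _).trans
          (((𝔞.restrict 𝒮.incl).unit).cst_heq _ _).symm)
      · exact isMLP_vacuous 𝒮 _ hXS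
    · by_cases hXT : 𝒯.objs X.1
      · refine isMLP_liftTransfer 𝒯 𝔞 hXT hXT (𝒯.id_mem X.1 hXT)
          (toRel ((𝔞.restrict 𝒯.incl).unit) c₂ (liftO 𝒯 𝔞 X hXT)) (hm₂ _) _ ?_
        intro Z q h e
        exact ((𝔞.unit).cst_heq _ _).trans ((𝔞.Hcast_heq _ _).trans
          (((𝔞.restrict 𝒯.incl).unit).cst_heq _ _).symm)
      · exact isMLP_vacuous 𝒯 _ hXT
    · intro Z q hq
      by_cases hS : pIn 𝒮 (q.map (bF 𝔞))
      · exact Or.inl ⟨hS, fun e => congrArg ((𝔞.unit).cst _) (hpos X Z q hS e)⟩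
      · exact Or.inr ⟨(cover_path hcov q).resolve_left hS,
          fun e => congrArg ((𝔞.unit).cst _) (hneg X Z q hS e)⟩
  · -- restriction to 𝒮 gives back c₁
    funext Xr Yr pr er
    have hpi := pIn_map_sharp 𝒮 𝔞 pr
    refine eq_of_heq ((fstarUnit_eval _ _ (by intros; exact HEq.rfl) cL _ _ pr er).trans
      ?_)
    rw [hpos _ _ (pr.map (sharpF (restrictProj 𝒮.incl 𝔞))) hpi
      (eltsMap (restrictProj 𝒮.incl 𝔞) er)]
    exact (𝔞.Hcast_heq _ _).trans (raw_congr c₁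
      (liftPth_map_sharp pr hpi (pIn_src 𝒮 _ hpi) (pIn_tgt 𝒮 _ hpi))
      (heq_liftElts_eltsMap er hpi (pIn_src 𝒮 _ hpi) (pIn_tgt 𝒮 _ hpi)))
  · -- restriction to 𝒯 gives back c₂
    funext Xr Yr pr er
    have hpiT := pIn_map_sharp 𝒯 𝔞 pr
    refine eq_of_heq ((fstarUnit_eval _ _ (by intros; exact HEq.rfl) cL _ _ pr er).trans
      ?_)
    by_cases hS : pIn 𝒮 ((pr.map (sharpF (restrictProj 𝒯.incl 𝔞))).map (bF 𝔞))
    · rw [hpos _ _ (pr.map (sharpF (restrictProj 𝒯.incl 𝔞))) hS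
        (eltsMap (restrictProj 𝒯.incl 𝔞) er)]
      exact (𝔞.Hcast_heq _ _).trans ((agree_lift 𝒮 𝒯 𝔞 c₁ c₂ h₁₂ _ hS hpiT _
        (pIn_src 𝒮 _ hS) (pIn_tgt 𝒮 _ hS) (pIn_src 𝒯 _ hpiT) (pIn_tgt 𝒯 _ hpiT)).trans
        (raw_congr c₂
          (liftPth_map_sharp pr hpiT (pIn_src 𝒯 _ hpiT) (pIn_tgt 𝒯 _ hpiT))
          (heq_liftElts_eltsMap er hpiT (pIn_src 𝒯 _ hpiT) (pIn_tgt 𝒯 _ hpiT))))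
    · rw [hneg _ _ (pr.map (sharpF (restrictProj 𝒯.incl 𝔞))) hS
        (eltsMap (restrictProj 𝒯.incl 𝔞) er)]
      exact (𝔞.Hcast_heq _ _).trans (raw_congr c₂
        (liftPth_map_sharp pr hpiT (pIn_src 𝒯 _ hpiT) (pIn_tgt 𝒯 _ hpiT))
        (heq_liftElts_eltsMap er hpiT (pIn_src 𝒯 _ hpiT) (pIn_tgt 𝒯 _ hpiT)))

end MVAux13
section MVAux14

variable {k : Type u} [CommRing k]
variable {𝒰 : Type u} [Category.{u} 𝒰]

theorem zero_heq {𝔟 : GradedCat k 𝒰} {X Y : 𝒰} {f g : X ⟶ Y} (h : f = g)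
    {B : 𝔟.Obj X} {A : 𝔟.Obj Y} : HEq ((0 : 𝔟.Hom f B A)) ((0 : 𝔟.Hom g B A)) := by
  subst h; rfl

theorem papp_congr {𝒮 : Subcat 𝒰} {𝔞 : GradedCat k 𝒰} {n : ℕ}
    (d : ∀ (X Z : Sh 𝔞) (q : Pth (Sh 𝔞) n X Z), pIn 𝒮 (q.map (bF 𝔞)) → PthElts 𝔞 q →
      𝔞.Hom (Sh.base q.comp) X.2 Z.2)
    {X Z : Sh 𝔞} {p p' : Pth (Sh 𝔞) n X Z} (hp : p = p')
    (h : pIn 𝒮 (p.map (bF 𝔞))) (h' : pIn 𝒮 (p'.map (bF 𝔞)))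
    {e : PthElts 𝔞 p} {e' : PthElts 𝔞 p'} (he : HEq e e') :
    HEq (d X Z p h e) (d X Z p' h' e') := by
  subst hp; rw [eq_of_heq he]

theorem mv_surj (𝔞 : GradedCat k 𝒰) (𝒮 𝒯 : Subcat 𝒰) {n : ℕ}
    (c₀ : RawCochain (𝔞.restrict (𝒮.inter 𝒯).incl).unit n)
    (hm₀ : IsCochain (𝔞.restrict (𝒮.inter 𝒯).incl).unit c₀) :
    ∃ (c₁ : RawCochain (𝔞.restrict 𝒮.incl).unit n)
      (c₂ : RawCochain (𝔞.restrict 𝒯.incl).unit n),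
      IsCochain (𝔞.restrict 𝒮.incl).unit c₁ ∧
      IsCochain (𝔞.restrict 𝒯.incl).unit c₂ ∧
      FstarUnit (interRes₂ 𝒮 𝒯 𝔞) (interRes₂_subcartesian 𝒮 𝒯 𝔞) c₂ -
        FstarUnit (interRes₁ 𝒮 𝒯 𝔞) (interRes₁_subcartesian 𝒮 𝒯 𝔞) c₁ = c₀ := by
  classical
  have hexd1 : ∃ d1 : ∀ (X Z : Sh 𝔞) (q : Pth (Sh 𝔞) n X Z),
      pIn 𝒮 (q.map (bF 𝔞)) → PthElts 𝔞 q → 𝔞.Hom (Sh.base q.comp) X.2 Z.2,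
      (∀ X Z q (hS : pIn 𝒮 (q.map (bF 𝔞))) (hT : pIn 𝒯 (q.map (bF 𝔞)))
        (e : PthElts 𝔞 q),
        d1 X Z q hS e = -(𝔞.Hcast (liftPth_comp q ((pIn_inter_iff 𝒮 𝒯 _).mpr ⟨hS, hT⟩)
            (pIn_src _ _ ((pIn_inter_iff 𝒮 𝒯 _).mpr ⟨hS, hT⟩))
            (pIn_tgt _ _ ((pIn_inter_iff 𝒮 𝒯 _).mpr ⟨hS, hT⟩)))
          (c₀ _ _ (liftPth (𝒮.inter 𝒯) 𝔞 q ((pIn_inter_iff 𝒮 𝒯 _).mpr ⟨hS, hT⟩)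
              (pIn_src _ _ ((pIn_inter_iff 𝒮 𝒯 _).mpr ⟨hS, hT⟩))
              (pIn_tgt _ _ ((pIn_inter_iff 𝒮 𝒯 _).mpr ⟨hS, hT⟩)))
            (liftElts (𝒮.inter 𝒯) 𝔞 e ((pIn_inter_iff 𝒮 𝒯 _).mpr ⟨hS, hT⟩)
              (pIn_src _ _ ((pIn_inter_iff 𝒮 𝒯 _).mpr ⟨hS, hT⟩))
              (pIn_tgt _ _ ((pIn_inter_iff 𝒮 𝒯 _).mpr ⟨hS, hT⟩)))))) ∧
      (∀ X Z q (hS : pIn 𝒮 (q.map (bF 𝔞))) (hT : ¬ pIn 𝒯 (q.map (bF 𝔞)))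
        (e : PthElts 𝔞 q), d1 X Z q hS e = 0) := by
    refine ⟨fun X Z q hS e =>
      if hT : pIn 𝒯 (q.map (bF 𝔞)) then
        -(𝔞.Hcast (liftPth_comp q ((pIn_inter_iff 𝒮 𝒯 _).mpr ⟨hS, hT⟩)
            (pIn_src _ _ ((pIn_inter_iff 𝒮 𝒯 _).mpr ⟨hS, hT⟩))
            (pIn_tgt _ _ ((pIn_inter_iff 𝒮 𝒯 _).mpr ⟨hS, hT⟩)))
          (c₀ _ _ (liftPth (𝒮.inter 𝒯) 𝔞 q ((pIn_inter_iff 𝒮 𝒯 _).mpr ⟨hS, hT⟩)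
              (pIn_src _ _ ((pIn_inter_iff 𝒮 𝒯 _).mpr ⟨hS, hT⟩))
              (pIn_tgt _ _ ((pIn_inter_iff 𝒮 𝒯 _).mpr ⟨hS, hT⟩)))
            (liftElts (𝒮.inter 𝒯) 𝔞 e ((pIn_inter_iff 𝒮 𝒯 _).mpr ⟨hS, hT⟩)
              (pIn_src _ _ ((pIn_inter_iff 𝒮 𝒯 _).mpr ⟨hS, hT⟩))
              (pIn_tgt _ _ ((pIn_inter_iff 𝒮 𝒯 _).mpr ⟨hS, hT⟩)))))
      else 0,
      fun X Z q hS hT e => dif_pos hT, fun X Z q hS hT e => dif_neg hT⟩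
  obtain ⟨d1, hd1pos, hd1neg⟩ := hexd1
  refine ⟨fun Xr Yr pr er =>
      𝔞.Hcast (sharp_base_comp (restrictProj 𝒮.incl 𝔞) pr)
        (d1 _ _ (pr.map (sharpF (restrictProj 𝒮.incl 𝔞))) (pIn_map_sharp 𝒮 𝔞 pr)
          (eltsMap (restrictProj 𝒮.incl 𝔞) er)),
    fun _ _ _ _ => 0, ?_, ?_, ?_⟩
  · -- multilinearity of c₁
    intro Xr
    refine isML_liftTransfer 𝒮 𝔞 _ ?d ?hml ?hchi
    case d =>
      exact fun Z q h e => (𝔞.unit).cst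
        (show Sh.base q.comp = 𝒮.incl.map (𝟙 Xr.1) ≫ Sh.base q.comp by simp; exact (Category.id_comp _).symm)
        (d1 ((sharpF (restrictProj 𝒮.incl 𝔞)).obj Xr) Z q h e)
    case hml =>
      -- IsMLP of the relative version of d1
      refine isMLP_glue 𝒮 (𝒮.inter 𝒯) 𝒮 _ ?dA ?dB ?hA ?hB ?hdesc
      case dA =>
        exact fun Z q hi e => (𝔞.unit).cst
          (show Sh.base q.comp = 𝒮.incl.map (𝟙 Xr.1) ≫ Sh.base q.comp by simp; exact (Category.id_comp _).symm)
          (-(𝔞.Hcast (liftPth_comp q hi (pIn_src _ _ hi) (pIn_tgt _ _ hi))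
            (c₀ _ _ (liftPth (𝒮.inter 𝒯) 𝔞 q hi (pIn_src _ _ hi) (pIn_tgt _ _ hi))
              (liftElts (𝒮.inter 𝒯) 𝔞 e hi (pIn_src _ _ hi) (pIn_tgt _ _ hi)))))
      case dB =>
        exact fun Z q h e => 0
      case hB =>
        exact isMLP_zero 𝒮 _ (fun _ _ _ _ => rfl)
      case hA =>
        by_cases hXi : (𝒮.inter 𝒯).objs ((sharpF (restrictProj 𝒮.incl 𝔞)).obj Xr).1
        · refine isMLP_neg (𝒮.inter 𝒯)
            (fun Z q hi e => (𝔞.unit).cst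
              (show Sh.base q.comp = 𝒮.incl.map (𝟙 Xr.1) ≫ Sh.base q.comp by simp; exact (Category.id_comp _).symm)
              (𝔞.Hcast (liftPth_comp q hi (pIn_src _ _ hi) (pIn_tgt _ _ hi))
                (c₀ _ _ (liftPth (𝒮.inter 𝒯) 𝔞 q hi (pIn_src _ _ hi) (pIn_tgt _ _ hi))
                  (liftElts (𝒮.inter 𝒯) 𝔞 e hi (pIn_src _ _ hi) (pIn_tgt _ _ hi)))))
            _ (fun Z q hi e => bimod_cst_neg _ _) ?_
          refine isMLP_liftTransfer (𝒮.inter 𝒯) 𝔞 hXi hXi ((𝒮.inter 𝒯).id_mem _ hXi)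
            (toRel ((𝔞.restrict (𝒮.inter 𝒯).incl).unit) c₀
              (liftO (𝒮.inter 𝒯) 𝔞 _ hXi)) (hm₀ _) _ ?_
          intro Z q h e
          exact ((𝔞.unit).cst_heq _ _).trans ((𝔞.Hcast_heq _ _).trans
            (((𝔞.restrict (𝒮.inter 𝒯).incl).unit).cst_heq _ _).symm)
        · exact isMLP_vacuous (𝒮.inter 𝒯) _ hXi
      case hdesc =>
        intro Z q hq
        by_cases hT : pIn 𝒯 (q.map (bF 𝔞))
        · exact Or.inl ⟨(pIn_inter_iff 𝒮 𝒯 _).mpr ⟨hq, hT⟩,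
            fun e => congrArg ((𝔞.unit).cst _) (hd1pos _ Z q hq hT e)⟩
        · exact Or.inr ⟨hq, fun e =>
            (congrArg ((𝔞.unit).cst _) (hd1neg _ Z q hq hT e)).trans
              (bimod_cst_zero _)⟩
    case hchi =>
      -- pointwise description of toRel c₁
      intro Zr qr er
      exact (((𝔞.restrict 𝒮.incl).unit).cst_heq _ _).trans
        ((𝔞.Hcast_heq _ _).trans ((𝔞.unit).cst_heq _ _).symm)
  · -- multilinearity of c₂ = 0
    intro Xr
    exact isML_zero _ (fun Z q e => bimod_cst_zero _)
  · -- the Mayer–Vietoris difference recovers c₀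
    funext Xr Yr pr er
    have h2 : FstarUnit (interRes₂ 𝒮 𝒯 𝔞) (interRes₂_subcartesian 𝒮 𝒯 𝔞)
        (fun _ _ _ _ => (0 : _)) Xr Yr pr er = 0 := by
      refine eq_of_heq ((fstarUnit_eval _ _ (by intros; exact HEq.rfl) _ _ _ pr er).trans
        ?_)
      have hmor : 𝒯.incl.map (Sh.base ((pr.map (sharpF (interRes₂ 𝒮 𝒯 𝔞))).comp)) =
          (𝒮.inter 𝒯).incl.map (Sh.base pr.comp) := by
        rw [sharp_base_comp]; rfl
      exact zero_heq hmor
    have hP : Pth.map (sharpF (restrictProj 𝒮.incl 𝔞))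
        (Pth.map (sharpF (interRes₁ 𝒮 𝒯 𝔞)) pr) =
        Pth.map (sharpF (restrictProj (𝒮.inter 𝒯).incl 𝔞)) pr :=
      map_sharp_inter₁ 𝒮 𝒯 𝔞 pr
    have hii := pIn_map_sharp (𝒮.inter 𝒯) 𝔞 pr
    have hS' : pIn 𝒮 ((Pth.map (sharpF (restrictProj (𝒮.inter 𝒯).incl 𝔞)) pr).map
        (bF 𝔞)) := ((pIn_inter_iff 𝒮 𝒯 _).mp hii).1
    have hT' : pIn 𝒯 ((Pth.map (sharpF (restrictProj (𝒮.inter 𝒯).incl 𝔞)) pr).map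
        (bF 𝔞)) := ((pIn_inter_iff 𝒮 𝒯 _).mp hii).2
    have h1 : FstarUnit (interRes₁ 𝒮 𝒯 𝔞) (interRes₁_subcartesian 𝒮 𝒯 𝔞)
        (fun Xr Yr pr er =>
          𝔞.Hcast (sharp_base_comp (restrictProj 𝒮.incl 𝔞) pr)
            (d1 _ _ (pr.map (sharpF (restrictProj 𝒮.incl 𝔞))) (pIn_map_sharp 𝒮 𝔞 pr)
              (eltsMap (restrictProj 𝒮.incl 𝔞) er))) Xr Yr pr er =
        -(c₀ Xr Yr pr er) := by
      refine eq_of_heq ((fstarUnit_eval _ _ (by intros; exact HEq.rfl) _ _ _ pr er).trans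
        ?_)
      refine (𝔞.Hcast_heq _ _).trans ?_
      refine (papp_congr d1 hP (pIn_map_sharp 𝒮 𝔞 _) hS'
        (elts_sharp_inter₁ 𝒮 𝒯 𝔞 er)).trans ?_
      rw [hd1pos ((sharpF (restrictProj 𝒮.incl 𝔞)).obj ((sharpF (interRes₁ 𝒮 𝒯 𝔞)).obj Xr))
        ((sharpF (restrictProj 𝒮.incl 𝔞)).obj ((sharpF (interRes₁ 𝒮 𝒯 𝔞)).obj Yr))
        (Pth.map (sharpF (restrictProj (𝒮.inter 𝒯).incl 𝔞)) pr) hS' hT'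
        (eltsMap (restrictProj (𝒮.inter 𝒯).incl 𝔞) er)]
      have hmor2 : Sh.base ((Pth.map (sharpF (restrictProj (𝒮.inter 𝒯).incl 𝔞))
          pr).comp) = (𝒮.inter 𝒯).incl.map (Sh.base pr.comp) :=
        sharp_base_comp _ pr
      exact heq_neg hmor2 ((𝔞.Hcast_heq _ _).trans (raw_congr c₀
        (liftPth_map_sharp pr hii (pIn_src _ _ hii) (pIn_tgt _ _ hii))
        (heq_liftElts_eltsMap er hii (pIn_src _ _ hii) (pIn_tgt _ _ hii))))
    show FstarUnit (interRes₂ 𝒮 𝒯 𝔞) (interRes₂_subcartesian 𝒮 𝒯 𝔞) _ Xr Yr pr er -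
      FstarUnit (interRes₁ 𝒮 𝒯 𝔞) (interRes₁_subcartesian 𝒮 𝒯 𝔞) _ Xr Yr pr er =
      c₀ Xr Yr pr er
    rw [h1, h2, zero_sub, neg_neg]

end MVAux14
/-- Let `𝔞` be a `𝒰`-graded category and `φ₁ : 𝒱₁ ⊆ 𝒰`, `φ₂ : 𝒱₂ ⊆ 𝒰` subcategories
which together constitute an `∞`-cover of `𝒰` (every `k`-simplex of `𝒩(𝒰)` lies in the
image of `𝒩ₖ(𝒱₁)` or of `𝒩ₖ(𝒱₂)`).  Then the Mayer–Vietoris sequence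
`0 → C_𝒰(𝔞) → C_{𝒱₁}(𝔞^{φ₁}) ⊕ C_{𝒱₂}(𝔞^{φ₂}) → C_{𝒱₁ ∩ 𝒱₂}(𝔞^{φ}) → 0`,
with first map `(φ₁*, φ₂*)` and second map `(−α₁*, α₂*)`, is exact (in every degree). -/
theorem statement15 {k : Type u} [CommRing k] {𝒰 : Type u} [Category.{u} 𝒰]
    (𝔞 : GradedCat k 𝒰) (𝒮 𝒯 : Subcat 𝒰)
    (hcov : ∀ (m : ℕ) (s : NerveTot 𝒰 m),
      (∃ t : NerveTot 𝒮.Cat m, NerveTot.map 𝒮.incl t = s) ∨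
      (∃ t : NerveTot 𝒯.Cat m, NerveTot.map 𝒯.incl t = s))
    (n : ℕ) :
    -- exactness at `C_𝒰(𝔞)`: the map `(φ₁*, φ₂*)` is injective on Hochschild cochains
    (∀ c c' : RawCochain 𝔞.unit n, IsCochain 𝔞.unit c → IsCochain 𝔞.unit c' →
      FstarUnit (restrictProj 𝒮.incl 𝔞) (restrictProj_subcartesian 𝒮.incl 𝔞) c =
        FstarUnit (restrictProj 𝒮.incl 𝔞) (restrictProj_subcartesian 𝒮.incl 𝔞) c' →
      FstarUnit (restrictProj 𝒯.incl 𝔞) (restrictProj_subcartesian 𝒯.incl 𝔞) c =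
        FstarUnit (restrictProj 𝒯.incl 𝔞) (restrictProj_subcartesian 𝒯.incl 𝔞) c' →
      c = c') ∧
    -- exactness in the middle: `(c₁, c₂)` is killed by `(−α₁*, α₂*)` iff it comes from
    -- a cochain on `(𝒰, 𝔞)`
    (∀ (c₁ : RawCochain (𝔞.restrict 𝒮.incl).unit n)
      (c₂ : RawCochain (𝔞.restrict 𝒯.incl).unit n),
      IsCochain (𝔞.restrict 𝒮.incl).unit c₁ → IsCochain (𝔞.restrict 𝒯.incl).unit c₂ →
      FstarUnit (interRes₁ 𝒮 𝒯 𝔞) (interRes₁_subcartesian 𝒮 𝒯 𝔞) c₁ =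
        FstarUnit (interRes₂ 𝒮 𝒯 𝔞) (interRes₂_subcartesian 𝒮 𝒯 𝔞) c₂ →
      ∃ c : RawCochain 𝔞.unit n, IsCochain 𝔞.unit c ∧
        FstarUnit (restrictProj 𝒮.incl 𝔞) (restrictProj_subcartesian 𝒮.incl 𝔞) c = c₁ ∧
        FstarUnit (restrictProj 𝒯.incl 𝔞) (restrictProj_subcartesian 𝒯.incl 𝔞) c = c₂) ∧
    -- exactness at the right: the map `(−α₁*, α₂*)` is surjective
    (∀ c₀ : RawCochain (𝔞.restrict (𝒮.inter 𝒯).incl).unit n,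
      IsCochain (𝔞.restrict (𝒮.inter 𝒯).incl).unit c₀ →
      ∃ (c₁ : RawCochain (𝔞.restrict 𝒮.incl).unit n)
        (c₂ : RawCochain (𝔞.restrict 𝒯.incl).unit n),
        IsCochain (𝔞.restrict 𝒮.incl).unit c₁ ∧
        IsCochain (𝔞.restrict 𝒯.incl).unit c₂ ∧
        FstarUnit (interRes₂ 𝒮 𝒯 𝔞) (interRes₂_subcartesian 𝒮 𝒯 𝔞) c₂ -
          FstarUnit (interRes₁ 𝒮 𝒯 𝔞) (interRes₁_subcartesian 𝒮 𝒯 𝔞) c₁ = c₀) := by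
  exact ⟨fun c c' _ _ h1 h2 => mv_inj 𝔞 𝒮 𝒯 hcov c c' h1 h2,
    fun c₁ c₂ hm₁ hm₂ h₁₂ => mv_mid 𝔞 𝒮 𝒯 hcov c₁ c₂ hm₁ hm₂ h₁₂,
    fun c₀ hm₀ => mv_surj 𝔞 𝒮 𝒯 c₀ hm₀⟩

end MapGr
end
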